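/- arXiv:2104.00908 — 12 statements merged into one kernel-verified Lean document; each statement's English description precedes it below -/
import Mathlib

section
/- Let K be a field, (Ω,→) an associative semigroup, V a K-vector space, and for every pair (α,β) ∈ Ω² let *_{α,β} : V ⊗ V → V be a K-bilinear product. Define a bilinear product ⋆ on V ⊗ K[Ω] (where K[Ω] is the semigroup algebra of Ω, with basis (δ_α)_{α∈Ω}) by (x ⊗ δ_α) ⋆ (y ⊗ δ_β) = (x *_{α,β} y) ⊗ δ_{α→β}, extended bilinearly. Then ⋆ is associative if, and only if, for all α,β,γ ∈ Ω and all x,y,z ∈ V one has (x *_{α,β} y) *_{α→β,γ} z = x *_{α,β→γ} (y *_{β,γ} z). -/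
open TensorProduct

-- injectivity helper
lemma tmul_single_inj (K Ω V : Type) [Field K] [AddCommGroup V] [Module K V]
    (σ : Ω) (x y : V)
    (h : x ⊗ₜ[K] (MonoidAlgebra.single σ (1:K) : MonoidAlgebra K Ω)
      = y ⊗ₜ[K] (MonoidAlgebra.single σ (1:K) : MonoidAlgebra K Ω)) : x = y := by
  have := congrArg (fun t => (TensorProduct.rid K V)
    ((LinearMap.lTensor V ((Finsupp.lapply σ : (Ω →₀ K) →ₗ[K] K) ∘ₗ
      (MonoidAlgebra.coeffLinearEquiv K).toLinearMap)) t)) h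
  simpa [Finsupp.lapply, MonoidAlgebra.coeff_single, Finsupp.single_eq_same] using this

lemma span_tmul_single (K Ω V : Type) [Field K] [AddCommGroup V] [Module K V]
    (u : V ⊗[K] MonoidAlgebra K Ω) :
    u ∈ Submodule.span K {t : V ⊗[K] MonoidAlgebra K Ω |
      ∃ (x : V) (α : Ω), t = x ⊗ₜ MonoidAlgebra.single α 1} := by
  induction u with
  | zero => exact Submodule.zero_mem _
  | add a b ha hb => exact Submodule.add_mem _ ha hb
  | tmul x f =>
    induction f using MonoidAlgebra.induction with
    | zero => rw [TensorProduct.tmul_zero]; exact Submodule.zero_mem _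
    | single_add α c f _ _ ih =>
      rw [TensorProduct.tmul_add]
      refine Submodule.add_mem _ ?_ ih
      have : (MonoidAlgebra.single α c : MonoidAlgebra K Ω) = c • MonoidAlgebra.single α 1 := by
        rw [MonoidAlgebra.smul_single, smul_eq_mul, mul_one]
      rw [this, TensorProduct.tmul_smul]
      exact Submodule.smul_mem _ _ (Submodule.subset_span ⟨x, α, rfl⟩)

/-- Let `K` be a field, `(Ω, →)` an associative semigroup (written
multiplicatively), `V` a `K`-vector space and, for every pair `(α, β) ∈ Ω²`, a `K`-bilinear
product `st α β : V →ₗ V →ₗ V`. Let `⋆` (here `mul`) be the bilinear product on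
`V ⊗ K[Ω]` determined by `(x ⊗ δ_α) ⋆ (y ⊗ δ_β) = (st α β x y) ⊗ δ_{α→β}`.
Then `⋆` is associative if, and only if, for all `α β γ ∈ Ω` and `x y z ∈ V` one has
`(x *_{α,β} y) *_{α→β,γ} z = x *_{α,β→γ} (y *_{β,γ} z)`. -/
theorem two_parameters_associative_iff
    (K Ω V : Type) [Field K] [Semigroup Ω] [AddCommGroup V] [Module K V]
    (st : Ω → Ω → V →ₗ[K] V →ₗ[K] V)
    (mul : V ⊗[K] MonoidAlgebra K Ω →ₗ[K] V ⊗[K] MonoidAlgebra K Ω →ₗ[K]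
      V ⊗[K] MonoidAlgebra K Ω)
    (hmul : ∀ (x y : V) (α β : Ω),
      mul (x ⊗ₜ MonoidAlgebra.single α 1) (y ⊗ₜ MonoidAlgebra.single β 1)
        = (st α β x y) ⊗ₜ MonoidAlgebra.single (α * β) 1) :
    (∀ u v w : V ⊗[K] MonoidAlgebra K Ω, mul (mul u v) w = mul u (mul v w)) ↔
      (∀ (α β γ : Ω) (x y z : V),
        st (α * β) γ (st α β x y) z = st α (β * γ) x (st β γ y z)) := by
  constructor
  · intro h α β γ x y z
    have := h (x ⊗ₜ MonoidAlgebra.single α 1) (y ⊗ₜ MonoidAlgebra.single β 1)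
      (z ⊗ₜ MonoidAlgebra.single γ 1)
    rw [hmul, hmul, hmul, hmul, mul_assoc] at this
    exact tmul_single_inj K Ω V _ _ _ this
  · intro h u v w
    have key : ∀ u ∈ Submodule.span K {t : V ⊗[K] MonoidAlgebra K Ω |
        ∃ (x : V) (α : Ω), t = x ⊗ₜ MonoidAlgebra.single α 1},
        ∀ v ∈ Submodule.span K {t : V ⊗[K] MonoidAlgebra K Ω |
        ∃ (x : V) (α : Ω), t = x ⊗ₜ MonoidAlgebra.single α 1},
        ∀ w ∈ Submodule.span K {t : V ⊗[K] MonoidAlgebra K Ω |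
        ∃ (x : V) (α : Ω), t = x ⊗ₜ MonoidAlgebra.single α 1},
        mul (mul u v) w = mul u (mul v w) := by
      intro u hu
      induction hu using Submodule.span_induction with
      | mem u hu₀ =>
        intro v hv
        induction hv using Submodule.span_induction with
        | mem v hv₀ =>
          intro w hw
          induction hw using Submodule.span_induction with
          | mem w hw₀ =>
            obtain ⟨x, α, rfl⟩ := hu₀
            obtain ⟨y, β, rfl⟩ := hv₀
            obtain ⟨z, γ, rfl⟩ := hw₀
            rw [hmul, hmul, hmul, hmul, h, mul_assoc]
          | zero => simp
          | add a b _ _ ha hb => simp [ha, hb]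
          | smul c a _ ha => simp [ha]
        | zero => intro w hw; simp
        | add a b _ _ ha hb => intro w hw; simp [ha w hw, hb w hw]
        | smul c a _ ha => intro w hw; simp [ha w hw]
      | zero => intro v hv w hw; simp
      | add a b _ _ ha hb => intro v hv w hw; simp [ha v hv w hw, hb v hv w hw]
      | smul c a _ ha => intro v hv w hw; simp [ha v hv w hw]
    exact key u (span_tmul_single K Ω V u) v (span_tmul_single K Ω V v)
      w (span_tmul_single K Ω V w)
end

section
/- For every n ≥ 1, the polynomial p_n ∈ ℤ[ω] has degree 2n−2, and its leading coefficient is the Catalan number C_{n−1} = (1/n)·binom(2n−2, n−1) (so C_0 = C_1 = 1, C_2 = 2, C_3 = 5, ...). -/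
open Polynomial

lemma my_catalan_pos : ∀ n, 0 < catalan n := by
  intro n
  induction n using Nat.strong_induction_on with
  | _ n ih =>
    match n with
    | 0 => simp
    | n+1 =>
      rw [catalan_succ']
      refine Finset.sum_pos' (fun i _ => Nat.zero_le _) ⟨(0, n), ?_, ?_⟩
      · simp [Finset.mem_antidiagonal]
      · simpa using ih n (by omega)

/-- Let `p : ℕ → ℤ[ω]` satisfy `p 1 = 1` and, for `n ≥ 2`,
`p n = ω(ω−1)·(Σ_{k=1}^{n−1} p k · p (n−k)) + ω · p (n−1)`.
Then for every `n ≥ 1`, the polynomial `p n` has degree `2n − 2` and its leading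
coefficient is the Catalan number `C_{n−1}`. -/
theorem pn_degree_and_leadingCoeff
    (p : ℕ → Polynomial ℤ)
    (hp1 : p 1 = 1)
    (hrec : ∀ n, 2 ≤ n →
      p n = X * (X - 1) * (∑ k ∈ Finset.Ico 1 n, p k * p (n - k)) + X * p (n - 1)) :
    ∀ n, 1 ≤ n → (p n).natDegree = 2 * n - 2 ∧ (p n).leadingCoeff = (catalan (n - 1) : ℤ) := by
  intro n
  induction n using Nat.strong_induction_on with
  | _ n ih =>
  intro hn
  match n, hn, ih with
  | 1, _, _ => simp [hp1]
  | (m+2), _, ih =>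
    have hrec' := hrec (m+2) (by omega)
    have hm21 : m + 2 - 1 = m + 1 := rfl
    rw [hm21] at hrec'
    set S := ∑ k ∈ Finset.Ico 1 (m+2), p k * p (m+2-k) with hS
    have hterm : ∀ k ∈ Finset.Ico 1 (m+2),
        (p k * p (m+2-k)).natDegree = 2*m ∧
        (p k * p (m+2-k)).coeff (2*m) = (catalan (k-1) : ℤ) * catalan (m+1-k) := by
      intro k hk
      rw [Finset.mem_Ico] at hk
      obtain ⟨hd1, hl1⟩ := ih k (by omega) (by omega)
      obtain ⟨hd2, hl2⟩ := ih (m+2-k) (by omega) (by omega)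
      have h1 : p k ≠ 0 := by
        intro h; rw [h, leadingCoeff_zero] at hl1
        exact_mod_cast (my_catalan_pos (k-1)).ne' (by exact_mod_cast hl1.symm)
      have h2 : p (m+2-k) ≠ 0 := by
        intro h; rw [h, leadingCoeff_zero] at hl2
        exact_mod_cast (my_catalan_pos (m+2-k-1)).ne' (by exact_mod_cast hl2.symm)
      have hdeg : (p k * p (m+2-k)).natDegree = 2*m := by
        rw [natDegree_mul h1 h2, hd1, hd2]; omega
      refine ⟨hdeg, ?_⟩
      have hco : (p k * p (m+2-k)).coeff (2*m) = (p k * p (m+2-k)).leadingCoeff := by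
        rw [leadingCoeff, hdeg]
      have harg : m + 2 - k - 1 = m + 1 - k := by omega
      rw [hco, leadingCoeff_mul, hl1, hl2, harg]
    have hSdeg : S.natDegree ≤ 2*m :=
      natDegree_sum_le_of_forall_le _ _ (fun k hk => (hterm k hk).1.le)
    have hcat0 : catalan (m+1) = ∑ i ∈ Finset.range (m+1), catalan i * catalan (m - i) := by
      rw [catalan_succ m, Fin.sum_univ_eq_sum_range (fun i => catalan i * catalan (m-i)) (m+1)]
    have hScoeff : S.coeff (2*m) = (catalan (m+1) : ℤ) := by
      rw [hS, finset_sum_coeff,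
        Finset.sum_congr rfl (fun k hk => (hterm k hk).2),
        Finset.sum_Ico_eq_sum_range, hcat0]
      push_cast
      refine Finset.sum_congr (by norm_num) fun i hi => ?_
      have a1 : 1 + i - 1 = i := by omega
      have a2 : m + 1 - (1 + i) = m - i := by omega
      rw [a1, a2]
    have hXp : (X * p (m+1)).natDegree ≤ 2*m+1 := by
      refine (natDegree_mul_le).trans ?_
      rw [natDegree_X]
      have := (ih (m+1) (by omega) (by omega)).1
      omega
    have hXX : (X * (X-1) : Polynomial ℤ) = X^2 - X := by ring
    have hcoeff : (p (m+2)).coeff (2*m+2) = (catalan (m+1) : ℤ) := by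
      rw [hrec', coeff_add, hXX, sub_mul, coeff_sub]
      have e1 : ((X:Polynomial ℤ)^2 * S).coeff (2*m+2) = S.coeff (2*m) := by
        exact coeff_X_pow_mul S 2 (2*m)
      have e2 : ((X:Polynomial ℤ) * S).coeff (2*m+2) = S.coeff (2*m+1) := by
        simpa using coeff_X_mul S (2*m+1)
      have e3 : S.coeff (2*m+1) = 0 := coeff_eq_zero_of_natDegree_lt (by omega)
      have e4 : (X * p (m+1)).coeff (2*m+2) = 0 :=
        coeff_eq_zero_of_natDegree_lt (by omega)
      rw [e1, e2, e3, e4, hScoeff]; ring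
    have hne : (p (m+2)).coeff (2*m+2) ≠ 0 := by
      rw [hcoeff]; exact_mod_cast (my_catalan_pos (m+1)).ne'
    have hle : (p (m+2)).natDegree ≤ 2*m+2 := by
      rw [hrec']
      refine (natDegree_add_le _ _).trans (max_le ?_ ?_)
      · refine (natDegree_mul_le).trans ?_
        have h2' : (X * (X-1) : Polynomial ℤ).natDegree ≤ 2 := by
          refine natDegree_mul_le.trans ?_
          have hx1 : ((X : Polynomial ℤ) - 1).natDegree ≤ 1 := by
            simpa using (natDegree_X_sub_C (1:ℤ)).le
          simp only [natDegree_X]; omega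
        omega
      · omega
    have hdeg : (p (m+2)).natDegree = 2*m+2 :=
      le_antisymm hle (le_natDegree_of_ne_zero hne)
    refine ⟨by rw [hdeg]; omega, ?_⟩
    rw [leadingCoeff, hdeg, hcoeff, hm21]
end

section
/- For every n ≥ 2, the monomial ω^n divides p_n in ℤ[ω]; writing p_n = ω^n q_n with q_n ∈ ℤ[ω], the constant term of q_n equals (−1)^n, i.e. q_n(0) = (−1)^n. -/
open Polynomial

/-- Let `p : ℕ → ℤ[ω]` satisfy `p 1 = 1` and, for `n ≥ 2`,
`p n = ω(ω−1)·(Σ_{k=1}^{n−1} p k · p (n−k)) + ω · p (n−1)`.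
Then for every `n ≥ 2` the monomial `ω^n` divides `p n`; writing `p n = ω^n · q`,
the constant term of `q` is `(−1)^n`. -/
theorem pn_eq_pow_mul_q
    (p : ℕ → Polynomial ℤ)
    (hp1 : p 1 = 1)
    (hrec : ∀ n, 2 ≤ n →
      p n = X * (X - 1) * (∑ k ∈ Finset.Ico 1 n, p k * p (n - k)) + X * p (n - 1)) :
    ∀ n, 2 ≤ n → ∃ q : Polynomial ℤ, p n = X ^ n * q ∧ q.coeff 0 = (-1 : ℤ) ^ n := by
  have key : ∀ n, 2 ≤ n → (X : Polynomial ℤ) ^ n ∣ p n ∧ (p n).coeff n = (-1 : ℤ) ^ n := by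
    intro n
    induction n using Nat.strong_induction_on with
    | _ n ih =>
      intro hn
      rcases eq_or_lt_of_le hn with h2 | h3
      · -- n = 2
        subst h2
        have h2 : p 2 = X ^ 2 := by
          rw [hrec 2 le_rfl, show Finset.Ico 1 2 = {1} from rfl, Finset.sum_singleton]
          simp [hp1]
          ring
        rw [h2]
        constructor
        · exact dvd_rfl
        · simp
      · -- n ≥ 3
        obtain ⟨m, rfl⟩ : ∃ m, n = m + 1 := ⟨n - 1, by omega⟩
        have hm2 : 2 ≤ m := by omega
        obtain ⟨hdm, hcm⟩ := ih m (by omega) hm2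
        obtain ⟨qm, hqm⟩ := hdm
        -- divisibility of the sum
        have hS : (X : Polynomial ℤ) ^ m ∣ ∑ k ∈ Finset.Ico 1 (m + 1), p k * p (m + 1 - k) := by
          apply Finset.dvd_sum
          intro k hk
          rw [Finset.mem_Ico] at hk
          rcases eq_or_ne k 1 with rfl | hk1
          · rw [hp1, one_mul, show m + 1 - 1 = m from rfl]
            exact ⟨qm, hqm⟩
          rcases eq_or_ne k m with hkm | hkm
          · rw [hkm, show m + 1 - m = 1 by omega, hp1, mul_one]
            exact ⟨qm, hqm⟩
          · have hk2 : 2 ≤ k := by omega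
            have hk3 : k < m := by omega
            obtain ⟨hk', -⟩ := ih k (by omega) hk2
            obtain ⟨hnk', -⟩ := ih (m + 1 - k) (by omega) (by omega)
            have : (X : Polynomial ℤ) ^ (k + (m + 1 - k)) ∣ p k * p (m + 1 - k) := by
              rw [pow_add]; exact mul_dvd_mul hk' hnk'
            exact dvd_trans (pow_dvd_pow X (by omega)) this
        obtain ⟨T, hT⟩ := hS
        -- constant-ish coefficient of T
        have hcoeff_zero : ∀ f : Polynomial ℤ, ∀ a i : ℕ, (X : Polynomial ℤ) ^ a ∣ f → i < a →
            f.coeff i = 0 := by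
          intro f a i h hi
          exact X_pow_dvd_iff.mp h i hi
        have hScoeff : (∑ k ∈ Finset.Ico 1 (m + 1), p k * p (m + 1 - k)).coeff m
            = 2 * (-1 : ℤ) ^ m := by
          rw [finset_sum_coeff]
          have h1mem : 1 ∈ Finset.Ico 1 (m + 1) := by simp; omega
          rw [← Finset.add_sum_erase _ _ h1mem]
          have hmmem : m ∈ (Finset.Ico 1 (m + 1)).erase 1 := by
            simp [Finset.mem_erase]; omega
          rw [← Finset.add_sum_erase _ _ hmmem]
          have hrest : ∑ k ∈ ((Finset.Ico 1 (m + 1)).erase 1).erase m,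
              (p k * p (m + 1 - k)).coeff m = 0 := by
            apply Finset.sum_eq_zero
            intro k hk
            simp only [Finset.mem_erase, Finset.mem_Ico] at hk
            obtain ⟨hkm, hk1, hk1', hkm'⟩ := hk
            have hk2 : 2 ≤ k := by omega
            obtain ⟨hk', -⟩ := ih k (by omega) hk2
            obtain ⟨hnk', -⟩ := ih (m + 1 - k) (by omega) (by omega)
            have hdvd : (X : Polynomial ℤ) ^ (k + (m + 1 - k)) ∣ p k * p (m + 1 - k) := by
              rw [pow_add]; exact mul_dvd_mul hk' hnk'
            exact hcoeff_zero _ _ _ hdvd (by omega)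
          rw [hrest]
          rw [hp1, one_mul, show m + 1 - 1 = m from rfl,
            show m + 1 - m = 1 by omega, hp1, mul_one, hcm]
          ring
        have hTc : T.coeff 0 = 2 * (-1 : ℤ) ^ m := by
          rw [hT] at hScoeff
          rw [← hScoeff]
          simpa using (coeff_X_pow_mul T m 0).symm
        -- main computation
        have hrw : p (m + 1) = X * (X - 1) * (X ^ m * T) + X * p m := by
          rw [hrec (m + 1) (by omega), hT]; simp
        have hfact : X * (X - 1) * ((X : Polynomial ℤ) ^ m * T) + X * p m
            = X ^ (m + 1) * ((X - 1) * T + qm) := by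
          rw [hqm]; ring
        constructor
        · rw [hrw, hfact]; exact ⟨_, rfl⟩
        · rw [hrw, hfact]
          have h0 := coeff_X_pow_mul ((X - 1) * T + qm) (m + 1) 0
          simp only [zero_add] at h0
          rw [h0]
          have hqmc : qm.coeff 0 = (-1 : ℤ) ^ m := by
            rw [hqm] at hcm
            rw [← hcm]
            simpa using (coeff_X_pow_mul qm m 0).symm
          simp [coeff_add, mul_coeff_zero, coeff_sub, coeff_X_zero, hTc, hqmc]
          ring
  intro n hn
  obtain ⟨hdvd, hc⟩ := key n hn
  obtain ⟨q, hq⟩ := hdvd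
  refine ⟨q, hq, ?_⟩
  rw [hq] at hc
  rw [← hc]
  simpa using (coeff_X_pow_mul q n 0).symm
end

section
/- For every odd integer n ≥ 3, the evaluation of the polynomial p_n at ω = 1/2 (in ℚ) is zero: p_n(1/2) = 0. -/
open Polynomial

/-- Let `p : ℕ → ℤ[ω]` satisfy `p 1 = 1` and, for `n ≥ 2`,
`p n = ω(ω−1)·(Σ_{k=1}^{n−1} p k · p (n−k)) + ω · p (n−1)`.
Then for every odd `n ≥ 3`, the evaluation of `p n` at `ω = 1/2` in `ℚ` vanishes. -/
theorem pn_eval_one_half_eq_zero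
    (p : ℕ → Polynomial ℤ)
    (hp1 : p 1 = 1)
    (hrec : ∀ n, 2 ≤ n →
      p n = X * (X - 1) * (∑ k ∈ Finset.Ico 1 n, p k * p (n - k)) + X * p (n - 1)) :
    ∀ n, 3 ≤ n → Odd n → Polynomial.aeval ((1 : ℚ) / 2) (p n) = 0 := by
  set q : ℕ → ℚ := fun n => Polynomial.aeval ((1:ℚ)/2) (p n) with hqdef
  intro n
  induction n using Nat.strong_induction_on with
  | _ n ih =>
    intro hn3 hodd
    obtain ⟨m, rfl⟩ : ∃ m, n = m + 1 := ⟨n - 1, by omega⟩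
    have hm2 : 2 ≤ m := by omega
    have hrecq : q (m+1) = (1/2) * (1/2 - 1) *
        (∑ k ∈ Finset.Ico 1 (m+1), q k * q (m+1-k)) + (1/2) * q m := by
      have := congrArg (Polynomial.aeval ((1:ℚ)/2)) (hrec (m+1) (by omega))
      simpa [hqdef, map_sum] using this
    have hq1 : q 1 = 1 := by simp [hqdef, hp1]
    obtain ⟨t, ht⟩ := hodd
    have hsum : ∑ k ∈ Finset.Ico 1 (m+1), q k * q (m+1-k) = 2 * q m := by
      rw [Finset.sum_eq_sum_Ico_succ_bot (by omega : 1 < m + 1),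
        Finset.sum_Ico_succ_top (by omega : 2 ≤ m)]
      have hmid : ∑ k ∈ Finset.Ico 2 m, q k * q (m+1-k) = 0 := by
        apply Finset.sum_eq_zero
        intro k hk
        simp only [Finset.mem_Ico] at hk
        rcases Nat.even_or_odd k with hke | hko
        · obtain ⟨j, hj⟩ := hke
          have hodd' : Odd (m+1-k) := ⟨t - j, by omega⟩
          have h0 : q (m+1-k) = 0 := ih (m+1-k) (by omega) (by omega) hodd'
          rw [h0]; ring
        · obtain ⟨j, hj⟩ := hko
          have h0 : q k = 0 := ih k (by omega) (by omega) ⟨j, hj⟩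
          rw [h0]; ring
      have h1 : m + 1 - 1 = m := by omega
      have h2 : m + 1 - m = 1 := by omega
      rw [hmid, h1, h2, hq1]
      ring
    show q (m+1) = 0
    rw [hrecq, hsum]
    ring
end

section
/- For every n ≥ 2, the following identity holds in ℤ[ω]: (n−1)·p_n = ω^n · Σ_{k=1}^{n−1} binom(n−1,k)·binom(n−1,k−1)·ω^{n−1−k}·(ω−1)^{k−1}. Equivalently, p_n = (ω^n/(n−1))·Σ_{k=1}^{n−1} binom(n−1,k) binom(n−1,k−1) ω^{n−1−k} (ω−1)^{k−1}. -/
open Polynomial Finset Nat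


def dd (a b : ℕ) : ℤ := if b = 0 then 0 else ((a.choose b) * (a.choose (b-1)) : ℕ)

lemma dd_zero (a : ℕ) : dd a 0 = 0 := rfl

lemma dd_top (a b : ℕ) (h : a < b) : dd a b = 0 := by
  unfold dd
  rw [if_neg (by omega), Nat.choose_eq_zero_of_lt h]
  norm_num

lemma dd_pos' (a b : ℕ) (hb : 1 ≤ b) :
    dd a b = (a.choose b : ℤ) * (a.choose (b-1) : ℤ) := by
  unfold dd
  rw [if_neg (by omega)]
  push_cast
  ring

lemma chq (n s t : ℕ) (h : n = s + t) : (n.choose s : ℚ) = (n ! : ℚ) / ((s ! : ℚ) * (t ! : ℚ)) := by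
  subst h
  rw [Nat.cast_choose ℚ (Nat.le_add_right s t), Nat.add_sub_cancel_left]

lemma fact_nz (n : ℕ) : ((n ! : ℕ) : ℚ) ≠ 0 := by
  exact_mod_cast Nat.factorial_ne_zero n

lemma choose_sr (a : ℕ) : ((a+1).choose a : ℚ) = (a : ℚ) + 1 := by
  rw [Nat.choose_succ_self_right]
  push_cast
  ring

lemma choose_two (e : ℕ) : ((e+2).choose 2 : ℚ) = ((e:ℚ)+2)*((e:ℚ)+1)/2 := by
  rw [chq (e+2) 2 e (by ring)]
  rw [show (e+2)! = (e+2)*((e+1)*(e)!) from rfl, show (2:ℕ)! = 2 from rfl]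
  have := fact_nz e
  push_cast
  field_simp

set_option maxHeartbeats 3000000 in
lemma dd_rec (c j : ℕ) (hj : j ≤ c + 2) :
    ((c:ℤ)+4)*((c:ℤ)+2) * dd (c+3) (j+1)
      = ((c:ℤ)+3)*(2*(c:ℤ)+5) * (dd (c+2) (j+1) + dd (c+2) j)
        - ((c:ℤ)+3)*((c:ℤ)+2) * (dd (c+1) (j+1) - 2 * dd (c+1) j + dd (c+1) (j-1)) := by
  rcases Nat.eq_zero_or_pos j with rfl | hj0
  · -- j = 0 : k = 1
    rw [show (0:ℕ)-1 = 0 from rfl, dd_zero, dd_zero,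
      dd_pos' (c+3) (0+1) (by omega), dd_pos' (c+2) (0+1) (by omega),
      dd_pos' (c+1) (0+1) (by omega)]
    simp [Nat.choose_one_right]
    push_cast
    ring
  rcases eq_or_ne j (c+2) with rfl | hne2
  · -- j = c+2 : k = m
    rw [show c+2-1 = c+1 from rfl,
      dd_pos' (c+3) (c+2+1) (by omega), dd_top (c+2) (c+2+1) (by omega),
      dd_pos' (c+2) (c+2) (by omega), dd_top (c+1) (c+2+1) (by omega),
      dd_top (c+1) (c+2) (by omega), dd_pos' (c+1) (c+1) (by omega)]
    rw [show c+2+1-1 = c+2 from rfl, show c+2-1 = c+1 from rfl, show c+1-1 = c from rfl]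
    rw [show c+2+1 = c+3 from rfl]
    have e1 : ((c+3).choose (c+3) : ℤ) = 1 := by simp [Nat.choose_self]
    have e2 : ((c+3).choose (c+2) : ℤ) = (c:ℤ)+3 := by
      rw [show c+3 = (c+2)+1 from rfl, Nat.choose_succ_self_right]; push_cast; ring
    have e3 : ((c+2).choose (c+2) : ℤ) = 1 := by simp [Nat.choose_self]
    have e4 : ((c+2).choose (c+1) : ℤ) = (c:ℤ)+2 := by
      rw [show c+2 = (c+1)+1 from rfl, Nat.choose_succ_self_right]; push_cast; ring
    have e5 : ((c+1).choose (c+1) : ℤ) = 1 := by simp [Nat.choose_self]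
    have e6 : ((c+1).choose c : ℤ) = (c:ℤ)+1 := by
      rw [Nat.choose_succ_self_right]; push_cast; ring
    rw [e1, e2, e3, e4, e5, e6]
    ring
  rcases eq_or_ne j (c+1) with rfl | hne1
  · -- j = c+1 : k = m-1
    rcases Nat.eq_zero_or_pos c with rfl | hc0
    · decide
    obtain ⟨e, rfl⟩ : ∃ e, c = e + 1 := ⟨c-1, by omega⟩
    -- c = e+1, j = e+2 ; m = e+4, k = e+3
    rw [show e+1+1-1 = e+1 from rfl, show e+1+1+1 = e+3 from rfl,
      show e+1+3 = e+4 from rfl, show e+1+2 = e+3 from rfl, show e+1+1 = e+2 from rfl]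
    rw [dd_pos' (e+4) (e+3) (by omega), dd_pos' (e+3) (e+3) (by omega),
      dd_pos' (e+3) (e+2) (by omega), dd_top (e+2) (e+3) (by omega),
      dd_pos' (e+2) (e+2) (by omega), dd_pos' (e+2) (e+1) (by omega)]
    rw [show e+3-1 = e+2 from rfl, show e+2-1 = e+1 from rfl, show e+1-1 = e from rfl]
    qify
    have c1 : ((e+4).choose (e+3) : ℚ) = (e:ℚ)+4 := by
      have := choose_sr (e+3); push_cast at this ⊢; rw [show e+4 = e+3+1 from rfl, this]; ring
    have c2 : ((e+4).choose (e+2) : ℚ) = ((e:ℚ)+4)*((e:ℚ)+3)/2 := by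
      rw [chq (e+4) (e+2) 2 (by ring)]
      rw [show (e+4)! = (e+4)*((e+3)*(e+2)!) from rfl, show (2:ℕ)! = 2 from rfl]
      have := fact_nz (e+2)
      push_cast
      field_simp
    have c3 : ((e+3).choose (e+3) : ℚ) = 1 := by rw [Nat.choose_self]; norm_num
    have c4 : ((e+3).choose (e+2) : ℚ) = (e:ℚ)+3 := by
      have := choose_sr (e+2); push_cast at this ⊢; rw [show e+3 = e+2+1 from rfl, this]; ring
    have c5 : ((e+3).choose (e+1) : ℚ) = ((e:ℚ)+3)*((e:ℚ)+2)/2 := by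
      rw [chq (e+3) (e+1) 2 (by ring)]
      rw [show (e+3)! = (e+3)*((e+2)*(e+1)!) from rfl, show (2:ℕ)! = 2 from rfl]
      have := fact_nz (e+1)
      push_cast
      field_simp
    have c6 : ((e+2).choose (e+2) : ℚ) = 1 := by rw [Nat.choose_self]; norm_num
    have c7 : ((e+2).choose (e+1) : ℚ) = (e:ℚ)+2 := by
      have := choose_sr (e+1); push_cast at this ⊢; rw [show e+2 = e+1+1 from rfl, this]; ring
    have c8 : ((e+2).choose e : ℚ) = ((e:ℚ)+2)*((e:ℚ)+1)/2 := by
      rw [chq (e+2) e 2 (by ring)]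
      rw [show (e+2)! = (e+2)*((e+1)*(e)!) from rfl, show (2:ℕ)! = 2 from rfl]
      have := fact_nz e
      push_cast
      field_simp
    rw [c1, c2, c3, c4, c5, c6, c7, c8]
    push_cast
    ring
  rcases eq_or_ne j 1 with rfl | hne1'
  · -- j = 1 : k = 2, here c ≥ 1 since j ≠ c+1
    obtain ⟨e, rfl⟩ : ∃ e, c = e + 1 := ⟨c-1, by omega⟩
    rw [show (1:ℕ)-1 = 0 from rfl, dd_zero,
      show e+1+3 = e+4 from rfl, show e+1+2 = e+3 from rfl, show e+1+1 = e+2 from rfl,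
      show (1:ℕ)+1 = 2 from rfl,
      dd_pos' (e+4) 2 (by omega), dd_pos' (e+3) 2 (by omega), dd_pos' (e+3) 1 (by omega),
      dd_pos' (e+2) 2 (by omega), dd_pos' (e+2) 1 (by omega)]
    rw [show (2:ℕ)-1 = 1 from rfl, show (1:ℕ)-1 = 0 from rfl]
    simp only [Nat.choose_one_right, Nat.choose_zero_right]
    qify
    have c1 : ((e+4).choose 2 : ℚ) = ((e:ℚ)+4)*((e:ℚ)+3)/2 := by
      have := choose_two (e+2); push_cast at this ⊢; rw [show e+4 = e+2+2 from rfl, this]; ring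
    have c2 : ((e+3).choose 2 : ℚ) = ((e:ℚ)+3)*((e:ℚ)+2)/2 := by
      have := choose_two (e+1); push_cast at this ⊢; rw [show e+3 = e+1+2 from rfl, this]; ring
    have c3 : ((e+2).choose 2 : ℚ) = ((e:ℚ)+2)*((e:ℚ)+1)/2 := choose_two e
    rw [c1, c2, c3]
    push_cast
    ring
  · -- generic : 2 ≤ j ≤ c
    obtain ⟨a, rfl⟩ : ∃ a, j = a + 2 := ⟨j-2, by omega⟩
    obtain ⟨b, rfl⟩ : ∃ b, c = a + b + 2 := ⟨c-(a+2), by omega⟩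
    rw [show a+2-1 = a+1 from rfl, show a+2+1 = a+3 from rfl,
      show a+b+2+3 = a+b+5 from rfl, show a+b+2+2 = a+b+4 from rfl,
      show a+b+2+1 = a+b+3 from rfl,
      dd_pos' (a+b+5) (a+3) (by omega), dd_pos' (a+b+4) (a+3) (by omega),
      dd_pos' (a+b+4) (a+2) (by omega), dd_pos' (a+b+3) (a+3) (by omega),
      dd_pos' (a+b+3) (a+2) (by omega), dd_pos' (a+b+3) (a+1) (by omega)]
    rw [show a+3-1 = a+2 from rfl, show a+2-1 = a+1 from rfl, show a+1-1 = a from rfl]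
    qify
    rw [chq (a+b+5) (a+3) (b+2) (by ring), chq (a+b+5) (a+2) (b+3) (by ring),
      chq (a+b+4) (a+3) (b+1) (by ring), chq (a+b+4) (a+2) (b+2) (by ring),
      chq (a+b+4) (a+1) (b+3) (by ring),
      chq (a+b+3) (a+3) b (by ring), chq (a+b+3) (a+2) (b+1) (by ring),
      chq (a+b+3) (a+1) (b+2) (by ring), chq (a+b+3) a (b+3) (by ring)]
    rw [show (a+b+5)! = (a+b+5)*((a+b+4)*(a+b+3)!) from rfl,
        show (a+b+4)! = (a+b+4)*(a+b+3)! from rfl,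
        show (a+3)! = (a+3)*((a+2)*((a+1)*(a)!)) from rfl,
        show (a+2)! = (a+2)*((a+1)*(a)!) from rfl,
        show (a+1)! = (a+1)*(a)! from rfl,
        show (b+3)! = (b+3)*((b+2)*((b+1)*(b)!)) from rfl,
        show (b+2)! = (b+2)*((b+1)*(b)!) from rfl,
        show (b+1)! = (b+1)*(b)! from rfl]
    have hfa := fact_nz a
    have hfb := fact_nz b
    have hfab := fact_nz (a+b+3)
    push_cast
    field_simp
    ring
noncomputable def qq (m : ℕ) : Polynomial ℤ :=
  ∑ j ∈ Finset.range m, Polynomial.C (dd m (j+1)) * X ^ (m - 1 - j) * (X - 1) ^ j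

lemma hq1 (m : ℕ) :
    (2*X - 1) * qq (m+1)
      = ∑ j ∈ Finset.range (m+2),
          Polynomial.C (dd (m+1) (j+1) + dd (m+1) j) * X ^ (m+1-j) * (X-1) ^ j := by
  have hX : X * qq (m+1)
      = ∑ j ∈ Finset.range (m+2), Polynomial.C (dd (m+1) (j+1)) * X ^ (m+1-j) * (X-1) ^ j := by
    rw [Finset.sum_range_succ, dd_top (m+1) (m+1+1) (by omega)]
    rw [qq, Finset.mul_sum]
    simp only [map_zero, zero_mul, add_zero]
    refine Finset.sum_congr rfl fun j hj => ?_
    simp only [Finset.mem_range] at hj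
    rw [show m+1-j = (m+1-1-j)+1 by omega, pow_succ]
    ring
  have hX1 : (X - 1) * qq (m+1)
      = ∑ j ∈ Finset.range (m+2), Polynomial.C (dd (m+1) j) * X ^ (m+1-j) * (X-1) ^ j := by
    rw [Finset.sum_range_succ', show dd (m+1) 0 = 0 from rfl]
    simp only [map_zero, zero_mul, add_zero]
    rw [qq, Finset.mul_sum]
    refine Finset.sum_congr rfl fun j hj => ?_
    simp only [Finset.mem_range] at hj
    rw [show m+1-(j+1) = m+1-1-j by omega, pow_succ]
    ring
  calc (2*X-1) * qq (m+1) = X * qq (m+1) + (X-1) * qq (m+1) := by ring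
  _ = _ := by
      rw [hX, hX1, ← Finset.sum_add_distrib]
      exact Finset.sum_congr rfl fun j hj => by rw [map_add]; ring

lemma hq2 (m : ℕ) :
    qq m = ∑ j ∈ Finset.range (m+2),
        Polynomial.C (dd m (j+1) - 2 * dd m j + dd m (j-1)) * X ^ (m+1-j) * (X-1) ^ j := by
  have hA : (∑ j ∈ Finset.range (m+2), Polynomial.C (dd m (j+1)) * X ^ (m+1-j) * (X-1) ^ j)
      = X^2 * qq m := by
    rw [Finset.sum_range_succ, Finset.sum_range_succ,
      dd_top m (m+1+1) (by omega), dd_top m (m+1) (by omega)]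
    simp only [map_zero, zero_mul, add_zero]
    rw [qq, Finset.mul_sum]
    refine Finset.sum_congr rfl fun j hj => ?_
    simp only [Finset.mem_range] at hj
    rw [show m+1-j = (m-1-j)+2 by omega, pow_add]
    ring
  have hB : (∑ j ∈ Finset.range (m+2), Polynomial.C (dd m j) * X ^ (m+1-j) * (X-1) ^ j)
      = X * (X-1) * qq m := by
    rw [Finset.sum_range_succ', show dd m 0 = 0 from rfl]
    simp only [map_zero, zero_mul, add_zero]
    rw [Finset.sum_range_succ, dd_top m (m+1) (by omega)]
    simp only [map_zero, zero_mul, add_zero]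
    rw [qq, Finset.mul_sum]
    refine Finset.sum_congr rfl fun j hj => ?_
    simp only [Finset.mem_range] at hj
    rw [show m+1-(j+1) = (m-1-j)+1 by omega, pow_add, pow_succ]
    ring
  have hC : (∑ j ∈ Finset.range (m+2), Polynomial.C (dd m (j-1)) * X ^ (m+1-j) * (X-1) ^ j)
      = (X-1)^2 * qq m := by
    rw [Finset.sum_range_succ', show dd m (0-1) = 0 from rfl]
    simp only [map_zero, zero_mul, add_zero]
    rw [Finset.sum_range_succ', show dd m (0+1-1) = 0 from rfl]
    simp only [map_zero, zero_mul, add_zero]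
    rw [qq, Finset.mul_sum]
    refine Finset.sum_congr rfl fun j hj => ?_
    simp only [Finset.mem_range] at hj
    rw [show j+1+1-1 = j+1 from rfl, show m+1-(j+1+1) = m-1-j by omega, pow_add]
    ring
  have expand : (∑ j ∈ Finset.range (m+2),
        Polynomial.C (dd m (j+1) - 2 * dd m j + dd m (j-1)) * X ^ (m+1-j) * (X-1) ^ j)
      = (∑ j ∈ Finset.range (m+2), Polynomial.C (dd m (j+1)) * X ^ (m+1-j) * (X-1) ^ j)
        - 2 * (∑ j ∈ Finset.range (m+2), Polynomial.C (dd m j) * X ^ (m+1-j) * (X-1) ^ j)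
        + (∑ j ∈ Finset.range (m+2), Polynomial.C (dd m (j-1)) * X ^ (m+1-j) * (X-1) ^ j) := by
    rw [Finset.mul_sum, ← Finset.sum_sub_distrib, ← Finset.sum_add_distrib]
    refine Finset.sum_congr rfl fun j hj => ?_
    simp only [map_add, map_sub, map_mul, map_ofNat]
    ring
  rw [expand, hA, hB, hC]
  ring

lemma dagger (c : ℕ) :
    ((c:Polynomial ℤ)+4)*((c:Polynomial ℤ)+2) * qq (c+3)
      = ((c:Polynomial ℤ)+3)*(2*(c:Polynomial ℤ)+5) * ((2*X-1) * qq (c+2))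
        - ((c:Polynomial ℤ)+3)*((c:Polynomial ℤ)+2) * qq (c+1) := by
  rw [show c+2 = (c+1)+1 from rfl, hq1 (c+1), hq2 (c+1)]
  rw [qq]
  rw [Finset.mul_sum, Finset.mul_sum, Finset.mul_sum, ← Finset.sum_sub_distrib]
  refine Finset.sum_congr rfl fun j hj => ?_
  simp only [Finset.mem_range] at hj
  have key := dd_rec c j (by omega)
  have keyR := congrArg (Polynomial.C : ℤ →+* Polynomial ℤ) key
  simp only [map_mul, map_add, map_sub, map_one, map_ofNat, map_natCast, map_intCast] at keyR
  have e1 : c+3-1-j = c+1+1-j := by omega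
  rw [e1]
  simp only [show c+1+1 = c+2 from rfl, map_add, map_sub, map_mul, map_ofNat] at keyR ⊢
  linear_combination (X ^ (c+2-j) * (X-1) ^ j) * keyR


noncomputable def Sp (p : ℕ → Polynomial ℤ) (n : ℕ) : Polynomial ℤ :=
  ∑ k ∈ Finset.Ico 1 n, p k * p (n - k)
noncomputable def Tp (p : ℕ → Polynomial ℤ) (n : ℕ) : Polynomial ℤ :=
  ∑ k ∈ Finset.Ico 1 n, (k : Polynomial ℤ) * (p k * p (n - k))


lemma Trefl (p : ℕ → Polynomial ℤ) (n : ℕ) :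
    Tp p n = ∑ k ∈ Finset.Ico 1 n, ((n - k : ℕ) : Polynomial ℤ) * (p k * p (n - k)) := by
  unfold Tp
  refine Finset.sum_nbij' (fun k => n - k) (fun k => n - k) ?_ ?_ ?_ ?_ ?_ <;>
    simp only [Finset.mem_Ico] <;> intro a ha
  · omega
  · omega
  · omega
  · omega
  · have h1 : n - (n - a) = a := by omega
    rw [h1]; ring

lemma two_T (p : ℕ → Polynomial ℤ) (n : ℕ) :
    2 * Tp p n = (n : Polynomial ℤ) * Sp p n := by
  rw [two_mul]
  nth_rewrite 2 [Trefl]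
  unfold Tp Sp
  rw [Finset.mul_sum, ← Finset.sum_add_distrib]
  refine Finset.sum_congr rfl fun k hk => ?_
  simp only [Finset.mem_Ico] at hk
  have h1 : ((n - k : ℕ) : Polynomial ℤ) = (n : Polynomial ℤ) - (k : Polynomial ℤ) := by
    rw [Nat.cast_sub (le_of_lt hk.2)]
  rw [h1]; ring

section
variable (p : ℕ → Polynomial ℤ) (hp1 : p 1 = 1)
  (hrec : ∀ n, 2 ≤ n →
      p n = X * (X - 1) * (∑ k ∈ Finset.Ico 1 n, p k * p (n - k)) + X * p (n - 1))

include hrec in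
lemma hS : ∀ n, 2 ≤ n → X * (X - 1) * Sp p n = p n - X * p (n - 1) := by
  intro n hn
  have := hrec n hn
  unfold Sp
  linear_combination -this

-- the triangle/symmetry lemma : A = 2 B
lemma hAB (n : ℕ) (hn : 3 ≤ n) :
    (∑ k ∈ Finset.Ico 2 n, (k : Polynomial ℤ) * Sp p k * p (n - k))
      = 2 * ∑ k ∈ Finset.Ico 1 (n-1), (k : Polynomial ℤ) * p k * Sp p (n - k) := by
  -- extend LHS to Ico 1 n (the k = 1 inner sum is empty)
  have hext : (∑ k ∈ Finset.Ico 1 n, (k : Polynomial ℤ) * Sp p k * p (n - k))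
      = ∑ k ∈ Finset.Ico 2 n, (k : Polynomial ℤ) * Sp p k * p (n - k) := by
    rw [Finset.sum_eq_sum_Ico_succ_bot (by omega : 1 < n)]
    simp [Sp]
  rw [← hext]
  -- expand Sp inside and push the factors in
  have hL : (∑ k ∈ Finset.Ico 1 n, (k : Polynomial ℤ) * Sp p k * p (n - k))
      = ∑ k ∈ Finset.Ico 1 n, ∑ i ∈ Finset.Ico 1 k,
          (k : Polynomial ℤ) * (p i * p (k - i) * p (n - k)) := by
    refine Finset.sum_congr rfl fun k hk => ?_
    rw [Sp, Finset.mul_sum, Finset.sum_mul]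
    exact Finset.sum_congr rfl fun i hi => by ring
  rw [hL]
  -- weight split : k = i + (k - i), and inner reflection
  have hsplit : ∀ k : ℕ, (∑ i ∈ Finset.Ico 1 k,
          (k : Polynomial ℤ) * (p i * p (k - i) * p (n - k)))
      = 2 * ∑ i ∈ Finset.Ico 1 k, (i : Polynomial ℤ) * (p i * p (k - i) * p (n - k)) := by
    intro k
    have hrefl : (∑ i ∈ Finset.Ico 1 k, (i : Polynomial ℤ) * (p i * p (k - i) * p (n - k)))
        = ∑ i ∈ Finset.Ico 1 k, ((k - i : ℕ) : Polynomial ℤ) * (p i * p (k - i) * p (n - k)) := by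
      refine Finset.sum_nbij' (fun i => k - i) (fun i => k - i) ?_ ?_ ?_ ?_ ?_ <;>
        simp only [Finset.mem_Ico] <;> intro a ha
      · omega
      · omega
      · omega
      · omega
      · have h1 : k - (k - a) = a := by omega
        rw [h1]; ring
    rw [two_mul]
    nth_rewrite 2 [hrefl]
    rw [← Finset.sum_add_distrib]
    refine Finset.sum_congr rfl fun i hi => ?_
    simp only [Finset.mem_Ico] at hi
    have h1 : ((k - i : ℕ) : Polynomial ℤ) = (k : Polynomial ℤ) - (i : Polynomial ℤ) := by
      rw [Nat.cast_sub (le_of_lt hi.2)]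
    rw [h1]; ring
  rw [Finset.sum_congr rfl fun k _ => hsplit k, ← Finset.mul_sum]
  congr 1
  -- triangle swap
  rw [← Finset.sum_Ico_Ico_comm' 1 n
    (fun i k => (i : Polynomial ℤ) * (p i * p (k - i) * p (n - k)))]
  -- now  Σ_{i ∈ Ico 1 n} Σ_{k ∈ Ico (i+1) n} ... ; identify inner with Sp p (n - i)
  have hinner : ∀ i ∈ Finset.Ico 1 n, (∑ k ∈ Finset.Ico (i+1) n,
        (i : Polynomial ℤ) * (p i * p (k - i) * p (n - k)))
      = (i : Polynomial ℤ) * p i * Sp p (n - i) := by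
    intro i hi
    simp only [Finset.mem_Ico] at hi
    rw [Sp, Finset.mul_sum]
    refine Finset.sum_nbij' (fun k => k - i) (fun k => k + i) ?_ ?_ ?_ ?_ ?_ <;>
      simp only [Finset.mem_Ico] <;> intro a ha
    · omega
    · omega
    · omega
    · omega
    · have h2 : n - i - (a - i) = n - a := by omega
      rw [h2]; ring
  rw [Finset.sum_congr rfl hinner]
  -- restrict Ico 1 n to Ico 1 (n-1) : the top term has Sp p 1 = 0
  have hsplitTop : (∑ i ∈ Finset.Ico 1 n, (i : Polynomial ℤ) * p i * Sp p (n - i))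
      = (∑ i ∈ Finset.Ico 1 (n-1), (i : Polynomial ℤ) * p i * Sp p (n - i))
        + ((n-1 : ℕ) : Polynomial ℤ) * p (n-1) * Sp p (n - (n-1)) := by
    rw [← Finset.sum_Ico_succ_top (by omega : 1 ≤ n - 1)]
    congr 1
  rw [hsplitTop]
  have h1 : n - (n - 1) = 1 := by omega
  rw [h1, show Sp p 1 = 0 by simp [Sp]]
  simp

include hp1 hrec in
lemma hB (n : ℕ) (hn : 3 ≤ n) :
    X * (X - 1) * (∑ k ∈ Finset.Ico 1 (n-1), (k : Polynomial ℤ) * p k * Sp p (n - k))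
      = (Tp p n - ((n : Polynomial ℤ) - 1) * p (n-1)) - X * Tp p (n-1) := by
  have hTtop : Tp p n = (∑ k ∈ Finset.Ico 1 (n-1), (k : Polynomial ℤ) * (p k * p (n - k)))
      + ((n-1 : ℕ) : Polynomial ℤ) * (p (n-1) * p (n - (n-1))) := by
    rw [Tp, ← Finset.sum_Ico_succ_top (by omega : 1 ≤ n - 1)]
    congr 1
  have h1 : n - (n-1) = 1 := by omega
  rw [h1, hp1] at hTtop
  have hcast : ((n - 1 : ℕ) : Polynomial ℤ) = (n : Polynomial ℤ) - 1 := by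
    rw [Nat.cast_sub (by omega : 1 ≤ n)]; norm_num
  rw [hcast] at hTtop
  have hmain : (∑ k ∈ Finset.Ico 1 (n-1), X * (X - 1) * ((k : Polynomial ℤ) * p k * Sp p (n - k)))
      = ∑ k ∈ Finset.Ico 1 (n-1), ((k : Polynomial ℤ) * (p k * p (n - k))
          - X * ((k : Polynomial ℤ) * (p k * p ((n-1) - k)))) := by
    refine Finset.sum_congr rfl fun k hk => ?_
    simp only [Finset.mem_Ico] at hk
    have hS' := hS p hrec (n - k) (by omega)
    have h2 : n - k - 1 = (n-1) - k := by omega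
    rw [h2] at hS'
    linear_combination ((k : Polynomial ℤ) * p k) * hS'
  rw [Finset.mul_sum, hmain, Finset.sum_sub_distrib, ← Finset.mul_sum]
  rw [hTtop, Tp]
  ring

include hp1 hrec in
lemma hiii (n : ℕ) (hn : 3 ≤ n) :
    Tp p n = p (n-1) + X * (X - 1) * (∑ k ∈ Finset.Ico 2 n, (k : Polynomial ℤ) * Sp p k * p (n - k))
      + X * (Tp p (n-1) + Sp p (n-1)) := by
  have hbot : Tp p n = (1 : Polynomial ℤ) * (p 1 * p (n - 1))
      + ∑ k ∈ Finset.Ico 2 n, (k : Polynomial ℤ) * (p k * p (n - k)) := by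
    rw [Tp, Finset.sum_eq_sum_Ico_succ_bot (by omega : 1 < n)]
    norm_num
  have hexp : (∑ k ∈ Finset.Ico 2 n, (k : Polynomial ℤ) * (p k * p (n - k)))
      = ∑ k ∈ Finset.Ico 2 n, (X * (X - 1) * ((k : Polynomial ℤ) * Sp p k * p (n - k))
          + X * ((k : Polynomial ℤ) * (p (k-1) * p (n - k)))) := by
    refine Finset.sum_congr rfl fun k hk => ?_
    simp only [Finset.mem_Ico] at hk
    have hr := hrec k (by omega)
    have : p k = X * (X-1) * Sp p k + X * p (k-1) := by rw [Sp]; exact hr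
    rw [this]; ring
  have hshift : (∑ k ∈ Finset.Ico 2 n, (k : Polynomial ℤ) * (p (k-1) * p (n - k)))
      = Tp p (n-1) + Sp p (n-1) := by
    have : (∑ k ∈ Finset.Ico 2 n, (k : Polynomial ℤ) * (p (k-1) * p (n - k)))
        = ∑ j ∈ Finset.Ico 1 (n-1), ((j : Polynomial ℤ) + 1) * (p j * p ((n-1) - j)) := by
      refine Finset.sum_nbij' (fun k => k - 1) (fun j => j + 1) ?_ ?_ ?_ ?_ ?_ <;>
        simp only [Finset.mem_Ico] <;> intro a ha
      · omega
      · omega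
      · omega
      · omega
      · have h1 : ((a : Polynomial ℤ)) = ((a - 1 : ℕ) : Polynomial ℤ) + 1 := by
          rw [Nat.cast_sub (by omega : 1 ≤ a)]; ring
        have h2 : n - 1 - (a - 1) = n - a := by omega
        rw [h2, ← h1]
    rw [this, Tp, Sp, ← Finset.sum_add_distrib]
    exact Finset.sum_congr rfl fun j hj => by ring
  rw [hbot, hp1, hexp, Finset.sum_add_distrib, ← Finset.mul_sum, ← Finset.mul_sum, hshift]
  ring

include hp1 hrec in
lemma three_term (n : ℕ) (hn : 3 ≤ n) :
    (n : Polynomial ℤ) * p n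
      = (2 * (n : Polynomial ℤ) - 3) * (2 * X - 1) * X * p (n-1)
        - ((n : Polynomial ℤ) - 3) * X^2 * p (n-2) := by
  have h3 := hiii p hp1 hrec n hn
  have hab := hAB p n hn
  have hb := hB p hp1 hrec n hn
  have hiv : Tp p n = (2*(n : Polynomial ℤ) - 3) * p (n-1) + X * Tp p (n-1) - X * Sp p (n-1) := by
    linear_combination -h3 - (X*(X-1)) * hab - 2 * hb
  have ht2n := two_T p n
  have ht2n1 := two_T p (n-1)
  have hcast : ((n - 1 : ℕ) : Polynomial ℤ) = (n : Polynomial ℤ) - 1 := by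
    rw [Nat.cast_sub (by omega : 1 ≤ n)]; norm_num
  rw [hcast] at ht2n1
  have hv : (n : Polynomial ℤ) * Sp p n
      = (4*(n : Polynomial ℤ) - 6) * p (n-1) + ((n : Polynomial ℤ) - 3) * X * Sp p (n-1) := by
    linear_combination 2 * hiv - ht2n + X * ht2n1
  have hsn := hS p hrec n (by omega)
  have hsn1 := hS p hrec (n-1) (by omega)
  have h2 : n - 1 - 1 = n - 2 := by omega
  rw [h2] at hsn1
  linear_combination X*(X-1)*hv - (n : Polynomial ℤ) * hsn + ((n : Polynomial ℤ) - 3) * X * hsn1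
end

lemma sum_eq_qq (m n : ℕ) (h : n = m + 1) :
    (∑ k ∈ Finset.Ico 1 n,
        ((m.choose k * m.choose (k-1) : ℕ) : Polynomial ℤ) * X ^ (m - k) * (X - 1) ^ (k-1))
      = qq m := by
  subst h
  rw [qq, Finset.sum_Ico_eq_sum_range]
  rw [show m+1-1 = m from rfl]
  refine Finset.sum_congr rfl fun i hi => ?_
  simp only [Finset.mem_range] at hi
  rw [show (1:ℕ)+i = i+1 by ring, show i+1-1 = i from rfl, show m-(i+1) = m-1-i by omega]
  rw [dd_pos' m (i+1) (by omega), show i+1-1 = i from rfl]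
  simp only [map_mul, map_natCast]
  push_cast
  ring

/-- Let `p : ℕ → ℤ[ω]` satisfy `p 1 = 1` and, for `n ≥ 2`,
`p n = ω(ω−1)·(Σ_{k=1}^{n−1} p k · p (n−k)) + ω · p (n−1)`.
Then for every `n ≥ 2` one has, in `ℤ[ω]`,
`(n−1)·p n = ω^n · Σ_{k=1}^{n−1} C(n−1,k)·C(n−1,k−1)·ω^{n−1−k}·(ω−1)^{k−1}`. -/
theorem pn_narayana_formula
    (p : ℕ → Polynomial ℤ)
    (hp1 : p 1 = 1)
    (hrec : ∀ n, 2 ≤ n →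
      p n = X * (X - 1) * (∑ k ∈ Finset.Ico 1 n, p k * p (n - k)) + X * p (n - 1)) :
    ∀ n, 2 ≤ n →
      ((n - 1 : ℕ) : Polynomial ℤ) * p n
        = X ^ n * ∑ k ∈ Finset.Ico 1 n,
            (((n - 1).choose k * (n - 1).choose (k - 1) : ℕ) : Polynomial ℤ)
              * X ^ (n - 1 - k) * (X - 1) ^ (k - 1) := by
  intro n
  induction n using Nat.strong_induction_on with
  | _ n ih =>
    intro hn
    have hI2 : Finset.Ico 1 2 = {1} := rfl
    have hp2 : p 2 = X^2 := by
      have h := hrec 2 (le_refl 2)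
      rw [show (2:ℕ)-1 = 1 from rfl, hI2] at h
      simp only [Finset.sum_singleton, show (2:ℕ)-1 = 1 from rfl, hp1] at h
      rw [h]; ring
    rcases eq_or_ne n 2 with rfl | hn2
    · simp only [show (2:ℕ)-1 = 1 from rfl, hI2, Finset.sum_singleton, hp2]
      norm_num
    rcases eq_or_ne n 3 with rfl | hn3
    · have hI3 : Finset.Ico 1 3 = {1, 2} := rfl
      have h := hrec 3 (by omega)
      rw [show (3:ℕ)-1 = 2 from rfl, hI3] at h
      simp only [Finset.sum_insert (by decide : (1:ℕ) ∉ ({2} : Finset ℕ)),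
        Finset.sum_singleton, show (3:ℕ)-1 = 2 from rfl, show (3:ℕ)-2 = 1 from rfl,
        hp1, hp2] at h
      simp only [show (3:ℕ)-1 = 2 from rfl, hI3,
        Finset.sum_insert (by decide : (1:ℕ) ∉ ({2} : Finset ℕ)), Finset.sum_singleton]
      rw [h]
      norm_num [Nat.choose]
      ring
    · -- n ≥ 4
      obtain ⟨j, rfl⟩ : ∃ j, n = j + 4 := ⟨n-4, by omega⟩
      have h1 := three_term p hp1 hrec (j+4) (by omega)
      have h2 := ih (j+3) (by omega) (by omega)
      have h3 := ih (j+2) (by omega) (by omega)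
      have h4 := dagger j
      simp only [show j+3-1 = j+2 from rfl] at h2
      rw [sum_eq_qq (j+2) (j+3) rfl] at h2
      simp only [show j+2-1 = j+1 from rfl] at h3
      rw [sum_eq_qq (j+1) (j+2) rfl] at h3
      simp only [show j+4-1 = j+3 from rfl, show j+4-2 = j+2 from rfl] at h1 ⊢
      rw [sum_eq_qq (j+3) (j+4) rfl]
      push_cast at h1 h2 h3 ⊢
      have hs : (((j:Polynomial ℤ)+4) * ((j:Polynomial ℤ)+2) * ((j:Polynomial ℤ)+1)) ≠ 0 := by
        intro h
        have h0 := congrArg (Polynomial.eval 0) h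
        simp [mul_eq_zero] at h0
        omega
      refine mul_left_cancel₀ hs ?_
      linear_combination
        (((j:Polynomial ℤ)+3)*((j:Polynomial ℤ)+2)*((j:Polynomial ℤ)+1)) * h1
        + (((j:Polynomial ℤ)+3)*((j:Polynomial ℤ)+1)*(2*(j:Polynomial ℤ)+5)*(2*X-1)*X) * h2
        - (((j:Polynomial ℤ)+3)*((j:Polynomial ℤ)+2)*((j:Polynomial ℤ)+1)*X^2) * h3
        - (((j:Polynomial ℤ)+1)*X^(j+4)) * h4
end

section
/- In the formal power series ring ℤ[ω][[X]], let P(X) = Σ_{n≥1} p_n X^n, let R(X) = −P(−X) = Σ_{n≥1} (−1)^{n+1} p_n X^n, and let Q(X) = X + Σ_{n≥2} ω^n X^n. Then Q is a compositional left inverse of R: substituting R into Q gives Q(R(X)) = X. (Equivalently, since R has zero constant term, ω(ω−1)R(X)² + R(X) = X·(1 − ω·R(X)).) -/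
/-- Let `p : ℕ → ℤ[ω]` satisfy `p 1 = 1` and, for `n ≥ 2`,
`p n = ω(ω−1)·(Σ_{k=1}^{n−1} p k · p (n−k)) + ω · p (n−1)`.
In `ℤ[ω][[X]]` set `R(X) = −P(−X) = Σ_{n≥1} (−1)^{n+1} p n X^n`. Then `R` satisfies the
identity expressing that `Q(X) = X + Σ_{n≥2} ω^n X^n` is a compositional left inverse of
`R` (i.e. `Q(R(X)) = X`, since `R` has zero constant term):
`ω(ω−1)·R(X)² + R(X) = X·(1 − ω·R(X))`. -/
theorem koszul_dual_series_inverse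
    (p : ℕ → Polynomial ℤ)
    (hp1 : p 1 = 1)
    (hrec : ∀ n, 2 ≤ n →
      p n = Polynomial.X * (Polynomial.X - 1) * (∑ k ∈ Finset.Ico 1 n, p k * p (n - k))
              + Polynomial.X * p (n - 1)) :
    letI R : PowerSeries (Polynomial ℤ) :=
      PowerSeries.mk fun n => if n = 0 then 0 else (-1 : Polynomial ℤ) ^ (n + 1) * p n
    PowerSeries.C (Polynomial.X : Polynomial ℤ)
        * (PowerSeries.C (Polynomial.X : Polynomial ℤ) - 1) * R ^ 2 + R
      = PowerSeries.X * (1 - PowerSeries.C (Polynomial.X : Polynomial ℤ) * R) := by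
  set R : PowerSeries (Polynomial ℤ) :=
    PowerSeries.mk fun n => if n = 0 then 0 else (-1 : Polynomial ℤ) ^ (n + 1) * p n with hR
  have hr : ∀ n, PowerSeries.coeff n R =
      if n = 0 then 0 else (-1 : Polynomial ℤ) ^ (n + 1) * p n := by
    intro n; simp [hR]
  have hCC : PowerSeries.C (Polynomial.X : Polynomial ℤ)
      * (PowerSeries.C (Polynomial.X : Polynomial ℤ) - 1)
      = PowerSeries.C ((Polynomial.X : Polynomial ℤ) * (Polynomial.X - 1)) := by
    rw [map_mul, map_sub, map_one]
  refine PowerSeries.ext fun n => ?_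
  rw [map_add, hCC, PowerSeries.coeff_C_mul, sq, PowerSeries.coeff_mul]
  rw [Finset.Nat.sum_antidiagonal_eq_sum_range_succ (fun i j =>
    PowerSeries.coeff i R * PowerSeries.coeff j R)]
  have hsum : ∑ k ∈ Finset.range (n + 1),
      PowerSeries.coeff k R * PowerSeries.coeff (n - k) R
      = (-1 : Polynomial ℤ) ^ n * ∑ k ∈ Finset.Ico 1 n, p k * p (n - k) := by
    rw [Finset.mul_sum]
    rw [← Finset.sum_subset
      (show Finset.Ico 1 n ⊆ Finset.range (n + 1) by
        intro k hk; simp only [Finset.mem_Ico] at hk; simp only [Finset.mem_range]; omega)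
      (by
        intro k hk hk'
        simp only [Finset.mem_range] at hk
        simp only [Finset.mem_Ico, not_and, not_lt] at hk'
        rcases Nat.eq_zero_or_pos k with h0 | h0
        · subst h0; rw [hr]; simp
        · have hnk : n - k = 0 := by omega
          rw [hnk, hr 0]; simp)]
    apply Finset.sum_congr rfl
    intro k hk
    simp only [Finset.mem_Ico] at hk
    rw [hr, hr, if_neg (by omega), if_neg (by omega)]
    have hs : (-1 : Polynomial ℤ) ^ (k + 1) * ((-1) ^ (n - k + 1)) = (-1) ^ n := by
      rw [← pow_add]
      have h2 : k + 1 + (n - k + 1) = n + 2 := by omega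
      rw [h2, pow_add]; ring
    calc (-1 : Polynomial ℤ) ^ (k + 1) * p k * ((-1) ^ (n - k + 1) * p (n - k))
        = ((-1 : Polynomial ℤ) ^ (k + 1) * (-1) ^ (n - k + 1)) * (p k * p (n - k)) := by ring
      _ = (-1 : Polynomial ℤ) ^ n * (p k * p (n - k)) := by rw [hs]
  rw [hsum, hr]
  cases n with
  | zero => simp
  | succ m =>
    rw [PowerSeries.coeff_succ_X_mul, map_sub, PowerSeries.coeff_C_mul, hr]
    rcases Nat.eq_zero_or_pos m with hm | hm
    · subst hm
      simp [hp1]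
    · have h2 : 2 ≤ m + 1 := by omega
      rw [hrec (m + 1) h2, if_neg (by omega), if_neg (by omega),
        PowerSeries.coeff_one, if_neg (by omega)]
      have hmm : m + 1 - 1 = m := by omega
      rw [hmm]
      have hsgn : (-1 : Polynomial ℤ) ^ (m + 1 + 1) = -(-1) ^ (m + 1) := by
        rw [pow_succ]; ring
      rw [hsgn]
      ring
end

section
/- Let (Ω,→) be a finite associative semigroup and K a field. For n ≥ 1, let P(n) be the free K-vector space with basis the words α_1…α_n of length n in Ω. For a word w of length n and words u_1,…,u_n, define w ∘ (u_1,…,u_n) = δ_{w, |u_1||u_2|⋯|u_n|} · (u_1 u_2 ⋯ u_n), where |u| denotes the →-product of the letters of a word u, u_1⋯u_n denotes concatenation, and δ is the Kronecker delta; extend ∘ multilinearly. Let I = Σ_{α∈Ω} α ∈ P(1). Then this composition is operadically associative and unital: (a) for any word w of length n, words u_1,…,u_n of lengths k_1,…,k_n, and words v_{i,j} (1 ≤ i ≤ n, 1 ≤ j ≤ k_i), one has w ∘ (u_1 ∘ (v_{1,1},…,v_{1,k_1}), …, u_n ∘ (v_{n,1},…,v_{n,k_n})) = (w ∘ (u_1,…,u_n))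 ∘ (v_{1,1},…,v_{1,k_1},…,v_{n,1},…,v_{n,k_n}); (b) I ∘ w = w and w ∘ (I,…,I) = w for every word w. In other words, (P(n))_{n≥1} with this composition and unit I is a nonsymmetric operad. -/
open scoped Classical

/-- The product `|u| = α₁ → α₂ → ⋯ → αₙ` of the letters of a word, `none` for the empty
word. -/
def prodOf {Ω : Type} [Semigroup Ω] : List Ω → Option Ω
  | [] => none
  | [α] => some α
  | α :: β :: t => (prodOf (β :: t)).map (α * ·)

/-- The multilinear extension of the operadic composition of `P = (P(n))`:
`mpart w [u₁, …, uₙ]` is the multilinear extension, in the vectors `u₁, …, uₙ`, of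
`w ∘ (v₁, …, vₙ) = δ_{w, |v₁|…|vₙ|} · (v₁⋯vₙ)` on basis words `vᵢ`. -/
noncomputable def mpart {K Ω : Type} [Field K] [Semigroup Ω] :
    List Ω → List (List Ω →₀ K) → (List Ω →₀ K)
  | [], [] => Finsupp.single [] 1
  | [], _ :: _ => 0
  | _ :: _, [] => 0
  | α :: w, u :: us =>
      u.sum fun v c =>
        if prodOf v = some α then c • Finsupp.mapDomain (v ++ ·) (mpart w us) else 0

/-- The full composition `f ∘ (u₁, …, uₙ)`, linear in `f` as well. -/
noncomputable def opComp {K Ω : Type} [Field K] [Semigroup Ω]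
    (f : List Ω →₀ K) (us : List (List Ω →₀ K)) : (List Ω →₀ K) :=
  f.sum fun w c => c • mpart w us



section Aux

variable {Ω : Type} [Semigroup Ω]

lemma prodOf_isSome {a : List Ω} (h : a ≠ []) : ∃ p, prodOf a = some p := by
  match a with
  | [α] => exact ⟨α, rfl⟩
  | α :: β :: t =>
    obtain ⟨p, hp⟩ := prodOf_isSome (a := β :: t) (by simp)
    exact ⟨α * p, by simp [prodOf, hp]⟩

lemma prodOf_cons (α : Ω) {b : List Ω} (hb : b ≠ []) :
    prodOf (α :: b) = (prodOf b).map (α * ·) := by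
  match b with
  | β :: t => rfl

lemma prodOf_append {a b : List Ω} (ha : a ≠ []) (hb : b ≠ []) :
    prodOf (a ++ b) = Option.map₂ (· * ·) (prodOf a) (prodOf b) := by
  match a with
  | [α] =>
    obtain ⟨p, hp⟩ := prodOf_isSome hb
    simp [prodOf_cons α hb, hp, prodOf, Option.map₂]
  | α :: β :: t =>
    obtain ⟨p, hp⟩ := prodOf_isSome (a := (β :: t) ++ b) (by simp)
    obtain ⟨q, hq⟩ := prodOf_isSome (a := β :: t) (by simp)
    obtain ⟨r, hr⟩ := prodOf_isSome hb
    have ih := prodOf_append (a := β :: t) (b := b) (by simp) hb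
    rw [hq, hr] at ih
    show ((prodOf ((β :: t) ++ b)).map (α * ·)) = _
    simp [prodOf, hq, hr, Option.map₂, mul_assoc]
    exact ⟨q*r, by simpa [Option.map₂] using ih, rfl⟩

lemma flatten_ne_nil {V : List (List Ω)} (hV : V ≠ []) (h : ∀ v ∈ V, v ≠ []) :
    V.flatten ≠ [] := by
  match V with
  | v :: t =>
    have := h v (by simp)
    simp only [List.flatten_cons, ne_eq, List.append_eq_nil_iff]
    rintro ⟨hv, -⟩
    exact this hv

lemma prodOf_flatten {u : List Ω} {V : List (List Ω)}
    (hF : List.Forall₂ (fun (β : Ω) v => prodOf v = some β) u V)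
    (hne : ∀ v ∈ V, v ≠ []) : prodOf V.flatten = prodOf u := by
  induction hF with
  | nil => rfl
  | @cons β v u' V' hβ htail ih =>
    rcases eq_or_ne V' [] with rfl | hV'
    · rcases htail
      show prodOf (v ++ []) = prodOf [β]
      rw [List.append_nil]; exact hβ
    · have hu' : u' ≠ [] := by rintro rfl; rcases htail; exact hV' rfl
      have hvne : v ≠ [] := by
        intro hv; rw [hv] at hβ; simp [prodOf] at hβ
      have hflat : V'.flatten ≠ [] := flatten_ne_nil hV' (fun x hx => hne x (by simp [hx]))
      have ihe := ih (fun x hx => hne x (by simp [hx]))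
      show prodOf (v ++ V'.flatten) = _
      rw [prodOf_append hvne hflat, ihe, prodOf_cons β hu', hβ]
      obtain ⟨p, hp⟩ := prodOf_isSome hu'
      simp [hp, Option.map₂]

variable {K : Type} [Field K]

lemma opComp_single (w : List Ω) (us : List (List Ω →₀ K)) :
    opComp (Finsupp.single w (1 : K)) us = mpart w us := by
  rw [opComp, Finsupp.sum_single_index (by simp), one_smul]

lemma opComp_zero (us : List (List Ω →₀ K)) : opComp (0 : List Ω →₀ K) us = 0 := by
  simp [opComp]

lemma mpart_cons (α : Ω) (w : List Ω) (u : List Ω →₀ K) (us : List (List Ω →₀ K)) :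
    mpart (α :: w) (u :: us) =
      u.sum fun v c =>
        if prodOf v = some α then c • Finsupp.mapDomain (v ++ ·) (mpart w us) else 0 := rfl

lemma mpart_zero_mem (w : List Ω) (us : List (List Ω →₀ K)) (h : (0 : List Ω →₀ K) ∈ us) :
    mpart w us = 0 := by
  induction us generalizing w with
  | nil => simp at h
  | cons u t ih =>
    match w with
    | [] => rfl
    | α :: w' =>
      rcases List.mem_cons.mp h with rfl | hmem
      · rw [mpart_cons, Finsupp.sum_zero_index]
      · rw [mpart_cons, ih w' hmem]
        simp

lemma mpart_single (w : List Ω) (us : List (List Ω)) :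
    mpart w (us.map fun u => Finsupp.single u (1 : K)) =
      if List.Forall₂ (fun (α : Ω) u => prodOf u = some α) w us
      then Finsupp.single us.flatten (1 : K) else 0 := by
  induction w generalizing us with
  | nil =>
    match us with
    | [] => simp [mpart]
    | u :: t => simp [mpart, List.forall₂_nil_left_iff]
  | cons α w' ih =>
    match us with
    | [] => simp [mpart]
    | u :: t =>
      rw [List.map_cons, mpart_cons,
        Finsupp.sum_single_index (by simp), ih t]
      by_cases h1 : prodOf u = some α
      · by_cases h2 : List.Forall₂ (fun (α : Ω) u => prodOf u = some α) w' t
        · simp [h1, h2, List.forall₂_cons, Finsupp.mapDomain_single]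
        · simp [h1, h2, List.forall₂_cons]
      · simp [h1, List.forall₂_cons]

lemma forall₂_append_split {R : Type} {S : Type} {Q : R → S → Prop}
    {a : List R} {b : List S} (hab : a.length = b.length)
    {c : List R} {d : List S} :
    List.Forall₂ Q (a ++ c) (b ++ d) ↔ List.Forall₂ Q a b ∧ List.Forall₂ Q c d := by
  induction a generalizing b with
  | nil =>
    match b with
    | [] => simp
  | cons x a' ih =>
    match b with
    | y :: b' =>
      simp only [List.cons_append, List.forall₂_cons, ih (by simpa using hab), and_assoc]

lemma forall₂_flatten {Q : Ω → List Ω → Prop}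
    {us : List (List Ω)} {vs : List (List (List Ω))}
    (hlen : List.Forall₂ (fun (u : List Ω) V => V.length = u.length) us vs) :
    List.Forall₂ Q us.flatten vs.flatten ↔ List.Forall₂ (List.Forall₂ Q) us vs := by
  induction hlen with
  | nil => simp
  | @cons u V us' vs' h htail ih =>
    simp only [List.flatten_cons, forall₂_append_split h.symm, ih, List.forall₂_cons]

lemma forall₂_prod_flatten {us : List (List Ω)} {vs : List (List (List Ω))}
    (hQ' : List.Forall₂ (List.Forall₂ (fun (β : Ω) v => prodOf v = some β)) us vs)
    (hvs : ∀ V ∈ vs, ∀ v ∈ V, v ≠ []) :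
    List.Forall₂ (fun (u : List Ω) V => prodOf V.flatten = prodOf u) us vs := by
  induction hQ' with
  | nil => exact List.Forall₂.nil
  | @cons u V us' vs' h htail ih =>
    exact List.Forall₂.cons (prodOf_flatten h (hvs V (by simp)))
      (ih fun X hX => hvs X (by simp [hX]))

lemma forall₂_congr_right {us : List (List Ω)} {vs : List (List (List Ω))}
    (hpf : List.Forall₂ (fun (u : List Ω) V => prodOf V.flatten = prodOf u) us vs)
    (w : List Ω) :
    List.Forall₂ (fun (α : Ω) x => prodOf x = some α) w (vs.map List.flatten) ↔
      List.Forall₂ (fun (α : Ω) u => prodOf u = some α) w us := by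
  induction hpf generalizing w with
  | nil => simp
  | @cons u V us' vs' h htail ih =>
    match w with
    | [] => simp
    | α :: w' => simp [List.forall₂_cons, h, ih]

lemma zero_mem_zipWith {P : List Ω → List (List Ω) → Prop}
    [inst : ∀ u V, Decidable (P u V)]
    {R : List Ω → List (List Ω) → Prop}
    {us : List (List Ω)} {vs : List (List (List Ω))}
    (hF : List.Forall₂ R us vs) (h : ¬ List.Forall₂ P us vs)
    (g : List Ω → List (List Ω) → (List Ω →₀ K)) :
    (0 : List Ω →₀ K) ∈
      List.zipWith (fun u V => if P u V then g u V else 0) us vs := by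
  induction hF with
  | nil => exact absurd List.Forall₂.nil h
  | @cons u V us' vs' _ htail ih =>
    by_cases hp : P u V
    · have : ¬ List.Forall₂ P us' vs' := fun hc => h (List.Forall₂.cons hp hc)
      simpa using Or.inr (ih this)
    · simp [hp]

variable [Fintype Ω]

lemma mpart_replicate (w : List Ω) :
    mpart w (List.replicate w.length (∑ α : Ω, Finsupp.single [α] (1 : K))) =
      Finsupp.single w (1 : K) := by
  induction w with
  | nil => rfl
  | cons α w' ih =>
    rw [List.length_cons, List.replicate_succ, mpart_cons,
      ← Finsupp.sum_finsetSum_index (by simp) (by intro i x y; split <;> simp [add_smul])]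
    have : ∀ β : Ω,
        ((Finsupp.single [β] (1 : K)).sum fun v c =>
          if prodOf v = some α then
            c • Finsupp.mapDomain (v ++ ·)
              (mpart w' (List.replicate w'.length (∑ γ : Ω, Finsupp.single [γ] (1 : K))))
          else 0)
        = if β = α then Finsupp.single (α :: w') (1 : K) else 0 := by
      intro β
      rw [Finsupp.sum_single_index (by simp)]
      by_cases h : β = α
      · subst h
        simp [ih, Finsupp.mapDomain_single, prodOf]
      · have : prodOf [β] = some β := rfl
        simp [this, h]
    rw [Finset.sum_congr rfl fun β _ => this β]
    simp

lemma opComp_I_left (w : List Ω) (hw : w ≠ []) :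
    opComp (∑ α : Ω, Finsupp.single [α] (1 : K)) [Finsupp.single w (1 : K)]
      = Finsupp.single w (1 : K) := by
  obtain ⟨p, hp⟩ := prodOf_isSome hw
  rw [opComp, ← Finsupp.sum_finsetSum_index (by simp) (by intro i x y; simp [add_smul])]
  have : ∀ α : Ω,
      ((Finsupp.single [α] (1 : K)).sum fun x c => c • mpart x [Finsupp.single w (1 : K)])
      = if α = p then Finsupp.single w (1 : K) else 0 := by
    intro α
    rw [Finsupp.sum_single_index (by simp), one_smul, mpart_cons,
      Finsupp.sum_single_index (by simp)]
    by_cases h : α = p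
    · subst h
      have hmp : mpart ([] : List Ω) ([] : List (List Ω →₀ K)) = Finsupp.single [] (1 : K) := rfl
      simp [hp, hmp, Finsupp.mapDomain_single]
    · rw [hp]
      simp [Ne.symm h, h]
  rw [Finset.sum_congr rfl fun α _ => this α]
  simp

lemma zipWith_if_all {P : List Ω → List (List Ω) → Prop}
    [inst : ∀ u V, Decidable (P u V)]
    {us : List (List Ω)} {vs : List (List (List Ω))} (h : List.Forall₂ P us vs) :
    List.zipWith (fun u V => if P u V then Finsupp.single V.flatten (1 : K) else 0) us vs
      = (vs.map List.flatten).map (fun v => Finsupp.single v (1 : K)) := by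
  induction h with
  | nil => rfl
  | @cons u V us' vs' hp _ ih => simp [hp, ih]


end Aux

/-- Let `(Ω,→)` be a finite semigroup and `K` a field. The spaces
`P(n)` spanned by the words of length `n` in `Ω`, with the composition
`w ∘ (u₁,…,uₙ) = δ_{w,|u₁|⋯|uₙ|} · u₁⋯uₙ` (extended multilinearly) and the unit
`I = Σ_{α∈Ω} α`, form a nonsymmetric operad: composition is (a) associative and
(b) unital. -/
theorem words_operad_assoc_and_unital
    (K Ω : Type) [Field K] [Semigroup Ω] [Fintype Ω] :
    -- (a) operadic associativity
    (∀ (w : List Ω) (us : List (List Ω)) (vs : List (List (List Ω))),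
      w ≠ [] → (∀ u ∈ us, u ≠ []) → (∀ V ∈ vs, ∀ v ∈ V, v ≠ []) →
      us.length = w.length → List.Forall₂ (fun (u : List Ω) V => V.length = u.length) us vs →
      opComp (Finsupp.single w (1 : K))
          (List.zipWith
            (fun (u : List Ω) (V : List (List Ω)) =>
              opComp (Finsupp.single u (1 : K)) (V.map fun v => Finsupp.single v (1 : K)))
            us vs)
        = opComp
            (opComp (Finsupp.single w (1 : K)) (us.map fun u => Finsupp.single u (1 : K)))
            (vs.flatten.map fun v => Finsupp.single v (1 : K))) ∧
    -- (b) unitality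
    (∀ w : List Ω, w ≠ [] →
      opComp (∑ α : Ω, Finsupp.single [α] (1 : K)) [Finsupp.single w (1 : K)]
          = Finsupp.single w (1 : K) ∧
      opComp (Finsupp.single w (1 : K))
          (List.replicate w.length (∑ α : Ω, Finsupp.single [α] (1 : K)))
          = Finsupp.single w (1 : K)) := by
  constructor
  · intro w us vs hw hus hvs hlen hF
    have hzip :
        (List.zipWith
          (fun (u : List Ω) (V : List (List Ω)) =>
            opComp (Finsupp.single u (1 : K)) (V.map fun v => Finsupp.single v (1 : K)))
          us vs)
        = List.zipWith
            (fun u V =>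
              if List.Forall₂ (fun (β : Ω) v => prodOf v = some β) u V
              then Finsupp.single V.flatten (1 : K) else 0) us vs := by
      simp only [opComp_single, mpart_single]
    rw [opComp_single, opComp_single, mpart_single]
    by_cases hQ' :
        List.Forall₂ (List.Forall₂ (fun (β : Ω) v => prodOf v = some β)) us vs
    · have hiff := forall₂_congr_right (forall₂_prod_flatten hQ' hvs) w
      rw [hzip.trans (zipWith_if_all hQ'), mpart_single]
      by_cases hQ : List.Forall₂ (fun (α : Ω) u => prodOf u = some α) w us
      · rw [if_pos (hiff.mpr hQ), if_pos hQ, opComp_single, mpart_single,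
          if_pos ((forall₂_flatten hF).mpr hQ')]
        rw [← List.flatten_flatten]
      · rw [if_neg (fun hc => hQ (hiff.mp hc)), if_neg hQ, opComp_zero]
    · rw [hzip, mpart_zero_mem _ _
          (zero_mem_zipWith (P := fun u V =>
              List.Forall₂ (fun (β : Ω) v => prodOf v = some β) u V) hF hQ'
            (fun _ V => Finsupp.single V.flatten (1 : K)))]
      by_cases hQ : List.Forall₂ (fun (α : Ω) u => prodOf u = some α) w us
      · rw [if_pos hQ, opComp_single, mpart_single,
          if_neg (fun hc => hQ' ((forall₂_flatten hF).mp hc))]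
      · rw [if_neg hQ, opComp_zero]
  · intro w hw
    exact ⟨opComp_I_left w hw, by rw [opComp_single, mpart_replicate]⟩
end

section
/- Let Ω be a nonempty set equipped with two binary operations → and ▷. Define φ : Ω² → Ω² by φ(α,β) = (α→β, α▷β) and τ : Ω² → Ω² by τ(α,β) = (β,α). Then (Ω,→,▷) is an extended associative semigroup if, and only if, the following equality of maps Ω³ → Ω³ holds: (Id × φ) ∘ (φ × Id) ∘ (Id × φ) = (φ × Id) ∘ (Id × τ) ∘ (φ × Id). -/
/-- Let `Ω` be a nonempty set with two binary operations `→` (`arr`) and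
`▷` (`tri`). Define `φ(α,β) = (α→β, α▷β)` and `τ(α,β) = (β,α)`. Then `(Ω,→,▷)` is an
extended associative semigroup if, and only if,
`(Id × φ) ∘ (φ × Id) ∘ (Id × φ) = (φ × Id) ∘ (Id × τ) ∘ (φ × Id)` as maps `Ω³ → Ω³`. -/
theorem eas_iff_braid_like
    (Ω : Type) [Nonempty Ω] (arr tri : Ω → Ω → Ω) :
    letI φ : Ω × Ω → Ω × Ω := fun p => (arr p.1 p.2, tri p.1 p.2)
    letI τ : Ω × Ω → Ω × Ω := fun p => (p.2, p.1)
    letI idφ : Ω × Ω × Ω → Ω × Ω × Ω := fun p => (p.1, φ p.2)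
    letI φid : Ω × Ω × Ω → Ω × Ω × Ω :=
      fun p => ((φ (p.1, p.2.1)).1, (φ (p.1, p.2.1)).2, p.2.2)
    letI idτ : Ω × Ω × Ω → Ω × Ω × Ω := fun p => (p.1, τ p.2)
    ((∀ α β γ : Ω, arr α (arr β γ) = arr (arr α β) γ) ∧
     (∀ α β γ : Ω, arr (tri α (arr β γ)) (tri β γ) = tri (arr α β) γ) ∧
     (∀ α β γ : Ω, tri (tri α (arr β γ)) (tri β γ) = tri α β)) ↔
      idφ ∘ φid ∘ idφ = φid ∘ idτ ∘ φid := by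
  constructor
  · rintro ⟨h1, h2, h3⟩
    funext p
    obtain ⟨α, β, γ⟩ := p
    simp only [Function.comp_apply, Prod.mk.injEq]
    exact ⟨h1 α β γ, h2 α β γ, h3 α β γ⟩
  · intro h
    refine ⟨fun α β γ => ?_, fun α β γ => ?_, fun α β γ => ?_⟩ <;>
      have := congrFun h (α, β, γ) <;>
      simp only [Function.comp_apply, Prod.mk.injEq] at this
    · exact this.1
    · exact this.2.1
    · exact this.2.2
end

section
/- Let K be a field and (A,Φ) a linear extended associative semigroup over K. For a K-vector space V, equip T_A(V) = ⊕_{n≥1} A^{⊗(n−1)} ⊗ V^{⊗n} with the products *_a defined by recursion: u *_a z = u·(a z) for z ∈ V, and u *_a (v·(b z)) = Σ_i (u *_{d_i} v)·(c_i z) where Φ(a⊗b) = Σ_i c_i ⊗ d_i (here u·(a z) appends a ∈ A and z ∈ V to the typed word u). Then (T_A(V), *) is the free Φ-associative algebra generated by V: for every Φ-associative algebra (W, ⋄) and every linear map θ : V → W, there exists a unique linear map Θ : T_A(V) → W such that Θ restricted to V ⊂ T_A(V) equals θ and Θ(u *_a v) = Θ(u) ⋄_a Θ(v) for all u,v ∈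 T_A(V) and a ∈ A. -/
open TensorProduct

section Defs

variable (K : Type) [Field K]
variable (A : Type) [AddCommGroup A] [Module K A]

/-- The "right reassociated" version of `Φ ⊗ Id` acting on `A ⊗ (A ⊗ A)`. -/
noncomputable def phiIdMap (Φ : A ⊗[K] A →ₗ[K] A ⊗[K] A) :
    A ⊗[K] (A ⊗[K] A) →ₗ[K] A ⊗[K] (A ⊗[K] A) :=
  (TensorProduct.assoc K A A A).toLinearMap ∘ₗ (LinearMap.rTensor A Φ) ∘ₗ
    (TensorProduct.assoc K A A A).symm.toLinearMap

/-- `(A, Φ)` is a linear extended associative semigroup (ℓEAS):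
`(Id ⊗ Φ) ∘ (Φ ⊗ Id) ∘ (Id ⊗ Φ) = (Φ ⊗ Id) ∘ (Id ⊗ τ) ∘ (Φ ⊗ Id)` on `A^{⊗3}`. -/
def IsLEAS (Φ : A ⊗[K] A →ₗ[K] A ⊗[K] A) : Prop :=
  (LinearMap.lTensor A Φ) ∘ₗ phiIdMap K A Φ ∘ₗ (LinearMap.lTensor A Φ)
    = phiIdMap K A Φ ∘ₗ (LinearMap.lTensor A (TensorProduct.comm K A A).toLinearMap) ∘ₗ
        phiIdMap K A Φ

variable (V : Type) [AddCommGroup V] [Module K V]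

/-- Evaluation `a ⊗ (x ⊗ y) ↦ x *_a y` of a family of products `st`. -/
noncomputable def evalSt (st : A →ₗ[K] V →ₗ[K] V →ₗ[K] V) :
    A ⊗[K] (V ⊗[K] V) →ₗ[K] V :=
  TensorProduct.lift ((TensorProduct.lift.equiv (RingHom.id K) V V V).toLinearMap ∘ₗ st)

/-- The Sweedler-type trilinear evaluation
`(c ⊗ d) ⊗ ((x ⊗ y) ⊗ z) ↦ (x *_d y) *_c z`. -/
noncomputable def rightTri (st : A →ₗ[K] V →ₗ[K] V →ₗ[K] V) :
    (A ⊗[K] A) ⊗[K] ((V ⊗[K] V) ⊗[K] V) →ₗ[K] V :=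
  evalSt K A V st
    ∘ₗ (TensorProduct.leftComm K V A V).toLinearMap
    ∘ₗ (TensorProduct.map (evalSt K A V st) LinearMap.id)
    ∘ₗ (TensorProduct.tensorTensorTensorComm K A A (V ⊗[K] V) V).toLinearMap
    ∘ₗ (LinearMap.rTensor ((V ⊗[K] V) ⊗[K] V) (TensorProduct.comm K A A).toLinearMap)

/-- `(V, st)` is a `Φ`-associative algebra:
`x *_a (y *_b z) = Σ (x *_{d_i} y) *_{c_i} z` where `Φ(a ⊗ b) = Σ c_i ⊗ d_i`. -/
def IsPhiAssoc (Φ : A ⊗[K] A →ₗ[K] A ⊗[K] A)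
    (st : A →ₗ[K] V →ₗ[K] V →ₗ[K] V) : Prop :=
  ∀ (a b : A) (x y z : V),
    st a x (st b y z) = rightTri K A V st ((Φ (a ⊗ₜ b)) ⊗ₜ ((x ⊗ₜ y) ⊗ₜ z))

/-- The space `T_A(V) = ⊕_{n≥1} A^{⊗(n−1)} ⊗ V^{⊗n}` of `A`-typed words, modelled as
`V ⊗ T(A ⊗ V)`: the typed word `a₁…a_{n−1}x₁…x_n` is `x₁ ⊗ (a₁⊗x₂)⋯(a_{n−1}⊗x_n)`. -/
abbrev TAlg : Type := V ⊗[K] TensorAlgebra K (A ⊗[K] V)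

/-- The inclusion of `V` in `T_A(V)` as typed words of length one. -/
noncomputable def iotaTA : V →ₗ[K] TAlg K A V :=
  (TensorProduct.mk K V (TensorAlgebra K (A ⊗[K] V))).flip 1

/-- The appending operation: `appTA (a ⊗ z) u = u · (a z)`. -/
noncomputable def appTA : (A ⊗[K] V) →ₗ[K] (TAlg K A V →ₗ[K] TAlg K A V) :=
  (LinearMap.lTensorHom V)
    ∘ₗ (LinearMap.mul K (TensorAlgebra K (A ⊗[K] V))).flip
    ∘ₗ (TensorAlgebra.ι K)

/-- The Sweedler-type map `(c ⊗ d) ⊗ ((u ⊗ v) ⊗ z) ↦ (u *_d v) · (c z)` used in the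
recursive definition of the products on `T_A(V)`. -/
noncomputable def recTA (st : A →ₗ[K] TAlg K A V →ₗ[K] TAlg K A V →ₗ[K] TAlg K A V) :
    (A ⊗[K] A) ⊗[K] ((TAlg K A V ⊗[K] TAlg K A V) ⊗[K] V) →ₗ[K] TAlg K A V :=
  (TensorProduct.lift (appTA K A V).flip)
    ∘ₗ (TensorProduct.map (evalSt K A (TAlg K A V) st) (LinearMap.id (M := A ⊗[K] V)))
    ∘ₗ (TensorProduct.tensorTensorTensorComm K A A (TAlg K A V ⊗[K] TAlg K A V) V).toLinearMap
    ∘ₗ (LinearMap.rTensor ((TAlg K A V ⊗[K] TAlg K A V) ⊗[K] V)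
          (TensorProduct.comm K A A).toLinearMap)

/-- `st` satisfies the defining recursion of the products `*_a` of `T_A(V)`:
`u *_a z = u·(a z)` for `z ∈ V`, and `u *_a (v·(b z)) = Σ (u *_{d_i} v)·(c_i z)`
where `Φ(a ⊗ b) = Σ c_i ⊗ d_i`. -/
def SatisfiesRecTA (Φ : A ⊗[K] A →ₗ[K] A ⊗[K] A)
    (st : A →ₗ[K] TAlg K A V →ₗ[K] TAlg K A V →ₗ[K] TAlg K A V) : Prop :=
  (∀ (a : A) (u : TAlg K A V) (z : V), st a u (iotaTA K A V z) = appTA K A V (a ⊗ₜ z) u) ∧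
  (∀ (a b : A) (u v : TAlg K A V) (z : V),
    st a u (appTA K A V (b ⊗ₜ z) v)
      = recTA K A V st ((Φ (a ⊗ₜ b)) ⊗ₜ ((u ⊗ₜ v) ⊗ₜ z)))

/-- The Sweedler-type map `(x ⊗ y) ⊗ (c ⊗ d) ↦ (x *_d y) ⊗ c` used to define the
associative product `⋆` on `V ⊗ A`. -/
noncomputable def sweedlerMul (st : A →ₗ[K] V →ₗ[K] V →ₗ[K] V) :
    (V ⊗[K] V) ⊗[K] (A ⊗[K] A) →ₗ[K] V ⊗[K] A :=
  (LinearMap.rTensor A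
      (evalSt K A V st ∘ₗ (TensorProduct.comm K (V ⊗[K] V) A).toLinearMap))
    ∘ₗ (TensorProduct.assoc K (V ⊗[K] V) A A).symm.toLinearMap
    ∘ₗ (LinearMap.lTensor (V ⊗[K] V) (TensorProduct.comm K A A).toLinearMap)

end Defs

section Aux

variable (K : Type) [Field K] (A : Type) [AddCommGroup A] [Module K A]
variable (V : Type) [AddCommGroup V] [Module K V]

lemma iotaTA_apply (z : V) : iotaTA K A V z = z ⊗ₜ[K] (1 : TensorAlgebra K (A ⊗[K] V)) :=
  rfl

lemma appTA_tmul (t : A ⊗[K] V) (x : V) (w : TensorAlgebra K (A ⊗[K] V)) :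
    appTA K A V t (x ⊗ₜ[K] w) = x ⊗ₜ[K] (w * TensorAlgebra.ι K t) := rfl

lemma evalSt_tmul (M : Type) [AddCommGroup M] [Module K M]
    (st : A →ₗ[K] M →ₗ[K] M →ₗ[K] M) (a : A) (x y : M) :
    evalSt K A M st (a ⊗ₜ[K] (x ⊗ₜ[K] y)) = st a x y := by
  simp [evalSt]

lemma rightTri_tmul (M : Type) [AddCommGroup M] [Module K M]
    (st : A →ₗ[K] M →ₗ[K] M →ₗ[K] M) (c d : A) (x y z : M) :
    rightTri K A M st ((c ⊗ₜ[K] d) ⊗ₜ[K] ((x ⊗ₜ[K] y) ⊗ₜ[K] z)) = st c (st d x y) z := by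
  simp [rightTri, evalSt_tmul]

lemma recTA_tmul (st : A →ₗ[K] TAlg K A V →ₗ[K] TAlg K A V →ₗ[K] TAlg K A V)
    (c d : A) (u v : TAlg K A V) (z : V) :
    recTA K A V st ((c ⊗ₜ[K] d) ⊗ₜ[K] ((u ⊗ₜ[K] v) ⊗ₜ[K] z))
      = appTA K A V (c ⊗ₜ[K] z) (st d u v) := by
  simp [recTA, evalSt_tmul]

/-- Any submodule of `T_A(V)` containing `V` and stable under appending is everything. -/
lemma taSpan (S : Submodule K (TAlg K A V))
    (h1 : ∀ z : V, iotaTA K A V z ∈ S)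
    (h2 : ∀ (b : A) (z : V) (u : TAlg K A V), u ∈ S → appTA K A V (b ⊗ₜ[K] z) u ∈ S) :
    ∀ u : TAlg K A V, u ∈ S := by
  have h2' : ∀ (t : A ⊗[K] V) (u : TAlg K A V), u ∈ S → appTA K A V t u ∈ S := by
    intro t u hu
    induction t using TensorProduct.induction_on with
    | zero => simpa using S.zero_mem
    | tmul b z => exact h2 b z u hu
    | add p q hp hq =>
        rw [map_add, LinearMap.add_apply]; exact S.add_mem hp hq
  let Q : Submodule K (TensorAlgebra K (A ⊗[K] V)) :=
    { carrier := {w | ∀ x : V, x ⊗ₜ[K] w ∈ S}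
      add_mem' := by
        intro w w' hw hw' x
        rw [TensorProduct.tmul_add]; exact S.add_mem (hw x) (hw' x)
      zero_mem' := by
        intro x
        rw [TensorProduct.tmul_zero]; exact S.zero_mem
      smul_mem' := by
        intro c w hw x
        rw [TensorProduct.tmul_smul]; exact S.smul_mem c (hw x) }
  have hone : (1 : TensorAlgebra K (A ⊗[K] V)) ∈ Q := fun x => h1 x
  have hmulι : ∀ (t : A ⊗[K] V) (w : TensorAlgebra K (A ⊗[K] V)),
      w ∈ Q → w * TensorAlgebra.ι K t ∈ Q := by
    intro t w hw x
    have := h2' t _ (hw x)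
    rwa [appTA_tmul] at this
  have hmul : ∀ w : TensorAlgebra K (A ⊗[K] V), ∀ a ∈ Q, a * w ∈ Q := by
    intro w
    induction w using TensorAlgebra.induction with
    | algebraMap r =>
        intro a ha
        rw [← Algebra.commutes, ← Algebra.smul_def]
        exact Q.smul_mem r ha
    | ι t => intro a ha; exact hmulι t a ha
    | mul b c hb hc =>
        intro a ha
        rw [← mul_assoc]
        exact hc _ (hb _ ha)
    | add b c hb hc =>
        intro a ha
        rw [mul_add]
        exact Q.add_mem (hb _ ha) (hc _ ha)
  have hQ : ∀ w : TensorAlgebra K (A ⊗[K] V), w ∈ Q := by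
    intro w
    simpa using hmul w 1 hone
  intro u
  induction u using TensorProduct.induction_on with
  | zero => exact S.zero_mem
  | tmul x w => exact hQ w x
  | add u v hu hv => exact S.add_mem hu hv

end Aux
/-- Theorem 3.2, freeness. Let `(A, Φ)` be a linear extended
associative semigroup and `V` a vector space; equip `T_A(V)` with the recursively defined
products `*_a`. Then `(T_A(V), *)` is the free `Φ`-associative algebra generated by `V`:
for every `Φ`-associative algebra `(W, ⋄)` and every linear map `θ : V → W` there is a
unique linear map `Θ : T_A(V) → W` restricting to `θ` on `V` and commuting with all the
products. -/
theorem free_phi_assoc_universal_property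
    (K : Type) [Field K] (A : Type) [AddCommGroup A] [Module K A]
    (Φ : A ⊗[K] A →ₗ[K] A ⊗[K] A) (hΦ : IsLEAS K A Φ)
    (V : Type) [AddCommGroup V] [Module K V]
    (st : A →ₗ[K] TAlg K A V →ₗ[K] TAlg K A V →ₗ[K] TAlg K A V)
    (hst : SatisfiesRecTA K A V Φ st)
    (W : Type) [AddCommGroup W] [Module K W]
    (stW : A →ₗ[K] W →ₗ[K] W →ₗ[K] W) (hW : IsPhiAssoc K A W Φ stW)
    (θ : V →ₗ[K] W) :
    ∃! Θ : TAlg K A V →ₗ[K] W,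
      (∀ z : V, Θ (iotaTA K A V z) = θ z) ∧
      (∀ (a : A) (u v : TAlg K A V), Θ (st a u v) = stW a (Θ u) (Θ v)) := by
  classical
  obtain ⟨hst1, hst2⟩ := hst
  -- the elementary products on W, as endomorphisms indexed by A ⊗ V
  let g : A ⊗[K] V →ₗ[K] Module.End K W :=
    TensorProduct.lift ((LinearMap.lcomp K (W →ₗ[K] W) θ) ∘ₗ (LinearMap.lflip (R₀ := K)).toLinearMap ∘ₗ stW)
  have g_tmul : ∀ (a : A) (z : V) (y : W), g (a ⊗ₜ[K] z) y = stW a y (θ z) := by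
    intro a z y
    simp [g]
  -- extend to an algebra morphism into the opposite endomorphism algebra
  let ρ : TensorAlgebra K (A ⊗[K] V) →ₐ[K] (Module.End K W)ᵐᵒᵖ :=
    TensorAlgebra.lift K ((MulOpposite.opLinearEquiv K).toLinearMap ∘ₗ g)
  have ρι : ∀ t : A ⊗[K] V, ρ (TensorAlgebra.ι K t) = MulOpposite.op (g t) := by
    intro t; simp [ρ]
  -- the candidate universal map
  let Θ : TAlg K A V →ₗ[K] W :=
    TensorProduct.lift ((LinearMap.lcomp K W θ ∘ₗ
      (MulOpposite.opLinearEquiv K (M := Module.End K W)).symm.toLinearMap ∘ₗ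
      ρ.toLinearMap).flip)
  have Θtmul : ∀ (x : V) (w : TensorAlgebra K (A ⊗[K] V)),
      Θ (x ⊗ₜ[K] w) = ((ρ w).unop) (θ x) := by
    intro x w
    simp [Θ]
  have Θiota : ∀ z : V, Θ (iotaTA K A V z) = θ z := by
    intro z
    rw [iotaTA_apply, Θtmul, map_one]
    rfl
  have Θapp : ∀ (t : A ⊗[K] V) (u : TAlg K A V), Θ (appTA K A V t u) = g t (Θ u) := by
    intro t u
    induction u using TensorProduct.induction_on with
    | zero => simp
    | tmul x w =>
        rw [appTA_tmul, Θtmul, Θtmul, map_mul, ρι, MulOpposite.unop_mul,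
          MulOpposite.unop_op, Module.End.mul_apply]
    | add u v hu hv => rw [map_add, map_add, map_add, hu, hv, map_add]
  -- the homomorphism property, by induction on the second argument
  let S : Submodule K (TAlg K A V) :=
    { carrier := {v | ∀ (a : A) (u : TAlg K A V), Θ (st a u v) = stW a (Θ u) (Θ v)}
      add_mem' := by
        intro v v' hv hv' a u
        simp only [map_add, hv a u, hv' a u]
      zero_mem' := by
        intro a u
        simp
      smul_mem' := by
        intro c v hv a u
        simp only [map_smul, hv a u] }
  have hS : ∀ v : TAlg K A V, v ∈ S := by
    refine taSpan K A V S ?_ ?_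
    · intro z a u
      rw [hst1, Θapp, Θiota, g_tmul]
    · intro b z v hv a u
      have hv' : ∀ (d : A) (u' : TAlg K A V), Θ (st d u' v) = stW d (Θ u') (Θ v) := hv
      show Θ (st a u (appTA K A V (b ⊗ₜ[K] z) v)) = stW a (Θ u) (Θ (appTA K A V (b ⊗ₜ[K] z) v))
      rw [hst2, Θapp, g_tmul, hW a b (Θ u) (Θ v) (θ z)]
      generalize Φ (a ⊗ₜ[K] b) = p
      induction p using TensorProduct.induction_on with
      | zero => simp [TensorProduct.zero_tmul]
      | tmul c d =>
          rw [recTA_tmul, rightTri_tmul, Θapp, g_tmul, hv' d u]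
      | add p q hp hq =>
          rw [TensorProduct.add_tmul, TensorProduct.add_tmul, map_add, map_add, map_add, hp, hq]
  refine ⟨Θ, ⟨Θiota, fun a u v => hS v a u⟩, ?_⟩
  rintro Θ' ⟨h1', h2'⟩
  apply LinearMap.ext
  intro u
  have : ∀ u : TAlg K A V, u ∈ LinearMap.eqLocus Θ' Θ := by
    refine taSpan K A V _ ?_ ?_
    · intro z
      show Θ' (iotaTA K A V z) = Θ (iotaTA K A V z)
      rw [h1' z, Θiota z]
    · intro b z u' hu'
      have hu'' : Θ' u' = Θ u' := hu'
      show Θ' (appTA K A V (b ⊗ₜ[K] z) u') = Θ (appTA K A V (b ⊗ₜ[K] z) u')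
      rw [← hst1, h2', h1', hu'', hst1, Θapp, g_tmul]
  exact this u
end

section
/- Let (Ω,⋆) be a group and K a field. A function λ : Ω → K satisfies λ(α ⋆ β)·λ(α) = λ(α)·λ(β) for all α,β ∈ Ω if, and only if, either λ is identically zero or there exist a subgroup H of Ω and a nonzero scalar c ∈ K such that λ(α) = c for every α ∈ H and λ(α) = 0 for every α ∉ H. In particular, if λ is a nonzero solution, then its support H = {α ∈ Ω : λ(α) ≠ 0} is a subgroup of Ω and λ is constant on H. -/
/-- Let `(Ω,⋆)` be a group and `K` a field. A function `λ : Ω → K`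
satisfies `λ(α⋆β)·λ(α) = λ(α)·λ(β)` for all `α, β` if, and only if, either `λ ≡ 0` or
there are a subgroup `H ≤ Ω` and a nonzero scalar `c ∈ K` such that `λ = c` on `H` and
`λ = 0` off `H`. -/
theorem family_associative_products_of_group
    (Ω K : Type) [Group Ω] [Field K] (l : Ω → K) :
    (∀ α β : Ω, l (α * β) * l α = l α * l β) ↔
      ((∀ α, l α = 0) ∨
        ∃ (H : Subgroup Ω) (c : K), c ≠ 0 ∧ (∀ α ∈ H, l α = c) ∧ (∀ α ∉ H, l α = 0)) := by
  constructor
  · intro h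
    by_cases hz : ∀ α, l α = 0
    · exact Or.inl hz
    · right
      push_neg at hz
      obtain ⟨α₀, hα₀⟩ := hz
      -- l is constant on its support, equal to l 1
      have hconst : ∀ α, l α ≠ 0 → l α = l 1 := by
        intro α hα
        have := h α 1
        rw [mul_one] at this
        exact mul_left_cancel₀ hα this
      have h1 : l 1 ≠ 0 := by
        intro h1
        exact hα₀ ((hconst α₀ hα₀).trans h1)
      have hinv : ∀ α, l α ≠ 0 → l α⁻¹ ≠ 0 := by
        intro α hα
        have := h α α⁻¹
        rw [mul_inv_cancel] at this
        intro hz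
        rw [hz, mul_zero] at this
        exact h1 ((mul_eq_zero.mp this).resolve_right hα)
      refine ⟨{ carrier := {α | l α ≠ 0},
                mul_mem' := ?_, one_mem' := h1, inv_mem' := ?_ }, l 1, h1, ?_, ?_⟩
      · intro a b ha hb
        have := h a b
        simp only [Set.mem_setOf_eq] at ha hb ⊢
        intro hz
        rw [hz, zero_mul] at this
        exact hb (mul_left_cancel₀ ha ((mul_zero _).trans this).symm)
      · intro a ha
        exact hinv a ha
      · intro α hα
        exact hconst α hα
      · intro α hα
        simpa using hα
  · rintro (hz | ⟨H, c, hc, hin, hout⟩) α β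
    · simp [hz]
    · by_cases hα : α ∈ H
      · by_cases hβ : β ∈ H
        · rw [hin _ (H.mul_mem hα hβ), hin _ hα, hin _ hβ]
        · have hab : α * β ∉ H := fun h => hβ (by
            have := H.mul_mem (H.inv_mem hα) h
            simpa using this)
          rw [hout _ hab, hout _ hβ, zero_mul, mul_zero]
      · rw [hout _ hα, mul_zero, zero_mul]
end

section
/- Let (Ω,→,▷) be an extended associative semigroup, K a field, and (V,(*_α)_{α∈Ω}) an Ω-associative algebra, i.e. x *_α (y *_β z) = (x *_{α▷β} y) *_{α→β} z for all α,β ∈ Ω and x,y,z ∈ V. For α,β ∈ Ω set *_{α,β} := *_{α▷β}. Then (V,(*_{α,β})_{α,β∈Ω}) is a two-parameters associative algebra over the semigroup (Ω,→): for all α,β,γ ∈ Ω and x,y,z ∈ V, (x *_{α▷β} y) *_{(α→β)▷γ} z = x *_{α▷(β→γ)} (y *_{β▷γ} z). -/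
/-- Let `(Ω,→,▷)` be an extended associative semigroup, `K` a field and
`(V, (*_α))` an `Ω`-associative algebra. Setting `*_{α,β} := *_{α▷β}`, one obtains a
two-parameters associative algebra over the semigroup `(Ω,→)`. -/
theorem omega_assoc_to_two_parameters
    (Ω K V : Type) [Field K] [AddCommGroup V] [Module K V]
    (arr tri : Ω → Ω → Ω)
    (heas1 : ∀ α β γ : Ω, arr α (arr β γ) = arr (arr α β) γ)
    (heas2 : ∀ α β γ : Ω, arr (tri α (arr β γ)) (tri β γ) = tri (arr α β) γ)
    (heas3 : ∀ α β γ : Ω, tri (tri α (arr β γ)) (tri β γ) = tri α β)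
    (st : Ω → V →ₗ[K] V →ₗ[K] V)
    (halg : ∀ (α β : Ω) (x y z : V),
      st α x (st β y z) = st (arr α β) (st (tri α β) x y) z) :
    ∀ (α β γ : Ω) (x y z : V),
      st (tri (arr α β) γ) (st (tri α β) x y) z
        = st (tri α (arr β γ)) x (st (tri β γ) y z) := by
  intro α β γ x y z
  rw [halg, heas2, heas3]
end

section
/- Let K be a field and V a K-vector space with two bilinear products *_1, *_2 satisfying, for all x,y,z ∈ V: (i) x *_1 (y *_1 z) + x *_1 (y *_2 z) = (x *_1 y) *_1 z; (ii) x *_2 (y *_1 z) = (x *_2 y) *_1 z; (iii) (x *_1 y) *_2 z = 0; (iv) x *_2 (y *_2 z) = (x *_2 y) *_2 z. Define {x,y} := x *_2 y − y *_2 x and x ▸ y := x *_1 y. Then (V, ▸, {,}) is a post-Lie algebra: {,} is a Lie bracket (bilinear, antisymmetric, satisfying the Jacobi identity), and for all x,y,z ∈ V, x ▸ {y,z} = (x ▸ y) ▸ z − x ▸ (y ▸ z) − (x ▸ z) ▸ y + x ▸ (z ▸ y), and {x,y} ▸ z = {x ▸ z, y} + {x, y ▸ z}. -/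
/-- Let `V` be a vector space over a field `K` with two bilinear
products `*₁` (`s₁`) and `*₂` (`s₂`) satisfying
(i)  `x *₁ (y *₁ z) + x *₁ (y *₂ z) = (x *₁ y) *₁ z`,
(ii) `x *₂ (y *₁ z) = (x *₂ y) *₁ z`,
(iii) `(x *₁ y) *₂ z = 0`,
(iv) `x *₂ (y *₂ z) = (x *₂ y) *₂ z`.
Define `{x,y} := x *₂ y − y *₂ x` and `x ▸ y := x *₁ y`. Then `(V, ▸, {,})` is a
post-Lie algebra: the bracket is antisymmetric and satisfies the Jacobi identity, and the
two post-Lie compatibility identities hold. -/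
theorem opposite_phi_assoc_gives_postLie
    (K V : Type) [Field K] [AddCommGroup V] [Module K V]
    (s₁ s₂ : V →ₗ[K] V →ₗ[K] V)
    (h1 : ∀ x y z : V, s₁ x (s₁ y z) + s₁ x (s₂ y z) = s₁ (s₁ x y) z)
    (h2 : ∀ x y z : V, s₂ x (s₁ y z) = s₁ (s₂ x y) z)
    (h3 : ∀ x y z : V, s₂ (s₁ x y) z = 0)
    (h4 : ∀ x y z : V, s₂ x (s₂ y z) = s₂ (s₂ x y) z) :
    letI br : V → V → V := fun x y => s₂ x y - s₂ y x
    letI act : V → V → V := fun x y => s₁ x y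
    (∀ x y : V, br x y = - br y x) ∧
    (∀ x y z : V, br x (br y z) + br y (br z x) + br z (br x y) = 0) ∧
    (∀ x y z : V,
      act x (br y z)
        = act (act x y) z - act x (act y z) - act (act x z) y + act x (act z y)) ∧
    (∀ x y z : V, act (br x y) z = br (act x z) y + br x (act y z)) := by
  refine ⟨?_, ?_, ?_, ?_⟩
  · intro x y; exact (neg_sub _ _).symm
  · intro x y z
    simp only [map_sub, LinearMap.sub_apply, h4]
    abel
  · intro x y z
    simp only [map_sub]
    have e1 := h1 x y z
    have e2 := h1 x z y
    have : s₁ x (s₂ y z) = s₁ (s₁ x y) z - s₁ x (s₁ y z) := by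
      rw [← e1]; abel
    rw [this]
    have : s₁ x (s₂ z y) = s₁ (s₁ x z) y - s₁ x (s₁ z y) := by
      rw [← e2]; abel
    rw [this]; abel
  · intro x y z
    simp only [map_sub, LinearMap.sub_apply, h2, h3]
    abel
end
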